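/- arXiv:1106.5756 — 4 statements merged into one kernel-verified Lean document; each statement's English description precedes it below -/
import Mathlib

section
/- Let ρ be a density matrix on ℂ^{d₁} ⊗ ℂ^{d₂} and let T_{ij} = tr(ρ (λ_i ⊗ μ_j)) for i = 1,…,d₁²−1, j = 1,…,d₂²−1 be its 2-body correlation tensor. Then Σ_{ij} T_{ij}² ≤ 4(d₁d₂ − 1)/(d₁d₂), with equality if and only if ρ is a maximally entangled pure state, i.e. ρ is pure and both of its reduced density matrices (partial traces over one factor) equal the maximally mixed states 𝕀_{d₁}/d₁ and 𝕀_{d₂}/d₂. -/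
open Matrix BigOperators ComplexOrder Kronecker

private lemma matrix_decomp {n ι : Type*} [Fintype n] [DecidableEq n]
    [Fintype ι] [DecidableEq ι] [Nonempty ι]
    (F : ι → Matrix n n ℂ) (N : ι → ℂ) (hN : ∀ p, N p ≠ 0)
    (horth : ∀ p q, (F p * F q).trace = if p = q then N p else 0)
    (hcard : Fintype.card ι = Fintype.card n * Fintype.card n)
    (M : Matrix n n ℂ) :
    M = ∑ p, (((M * F p).trace) / N p) • F p ∧
    (M * M).trace = ∑ p, ((M * F p).trace) ^ 2 / N p := by
  have key : ∀ (c : ι → ℂ) (q : ι), ((∑ i, c i • F i) * F q).trace = c q * N q := by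
    intro c q
    rw [Finset.sum_mul, trace_sum]
    simp only [smul_mul_assoc, trace_smul, horth, smul_eq_mul, mul_ite, mul_zero]
    simp [Finset.sum_ite_eq']
  have hli : LinearIndependent ℂ F := by
    rw [Fintype.linearIndependent_iff]
    intro c hc p
    have h0 := key c p
    rw [hc, Matrix.zero_mul, trace_zero] at h0
    exact (mul_eq_zero.mp h0.symm).resolve_right (hN p)
  have hspan : Submodule.span ℂ (Set.range F) = ⊤ :=
    hli.span_eq_top_of_card_eq_finrank
      (by rw [hcard]; simp [Module.finrank_matrix])
  have hM : M ∈ Submodule.span ℂ (Set.range F) := by rw [hspan]; trivial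
  obtain ⟨c, hc⟩ := Submodule.mem_span_range_iff_exists_fun ℂ |>.mp hM
  have hcoef : ∀ q, (M * F q).trace = c q * N q := by
    intro q; rw [← hc]; exact key c q
  constructor
  · conv_lhs => rw [← hc]
    refine Finset.sum_congr rfl fun p _ => ?_
    rw [hcoef p, mul_div_cancel_right₀ _ (hN p)]
  · have hterm : ∀ p, ((c p • F p) * (∑ q, c q • F q)).trace = c p ^ 2 * N p := by
      intro p
      rw [Finset.mul_sum, trace_sum]
      simp only [smul_mul_assoc, mul_smul_comm, trace_smul, horth, smul_eq_mul]
      rw [Finset.sum_eq_single p (fun q _ hq => by rw [if_neg (Ne.symm hq)]; ring)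
        (fun h => absurd (Finset.mem_univ p) h)]
      simp [pow_two]; ring
    have h2 : (M * M).trace = ∑ p, c p ^ 2 * N p := by
      conv_lhs => rw [← hc]
      rw [Finset.sum_mul, trace_sum]
      exact Finset.sum_congr rfl fun p _ => hterm p
    rw [h2]
    refine Finset.sum_congr rfl fun p _ => ?_
    rw [hcoef p]
    rw [eq_div_iff (hN p)]
    ring

private lemma e_orth {d : ℕ} (hd : 2 ≤ d)
    (lam : Fin (d ^ 2 - 1) → Matrix (Fin d) (Fin d) ℂ)
    (hlam_tr : ∀ i, (lam i).trace = 0)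
    (hlam_orth : ∀ m n, (lam m * lam n).trace = if m = n then 2 else 0) :
    ∀ k l : Option (Fin (d ^ 2 - 1)),
      ((k.elim 1 lam) * (l.elim 1 lam)).trace = if k = l then (k.elim (d : ℂ) 2) else 0 := by
  rintro (_ | i) (_ | j)
  · simp [Matrix.trace_one]
  · simpa using hlam_tr j
  · simpa using hlam_tr i
  · simpa using hlam_orth i j

private lemma e_card {d : ℕ} (hd : 2 ≤ d) :
    Fintype.card (Option (Fin (d ^ 2 - 1))) = d ^ 2 := by
  have : 0 < d ^ 2 := by positivity
  simp [Fintype.card_option]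
  omega

private lemma single_decomp {d : ℕ} (hd : 2 ≤ d)
    (lam : Fin (d ^ 2 - 1) → Matrix (Fin d) (Fin d) ℂ)
    (hlam_tr : ∀ i, (lam i).trace = 0)
    (hlam_orth : ∀ m n, (lam m * lam n).trace = if m = n then 2 else 0)
    (M : Matrix (Fin d) (Fin d) ℂ) (hMtr : M.trace = 1)
    (hM0 : ∀ i, (M * lam i).trace = 0) :
    M = ((d : ℂ))⁻¹ • 1 := by
  obtain ⟨h1, -⟩ := matrix_decomp (fun k : Option (Fin (d ^ 2 - 1)) => k.elim 1 lam)
      (fun k => k.elim (d : ℂ) 2)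
      (by rintro (_ | i) <;> simp <;> omega)
      (e_orth hd lam hlam_tr hlam_orth)
      (by rw [e_card hd]; simp [pow_two])
      M
  rw [h1, Fintype.sum_option]
  simp [hM0, hMtr]

private lemma ptrace1_mul (d₁ d₂ : ℕ) (ρ : Matrix (Fin d₁ × Fin d₂) (Fin d₁ × Fin d₂) ℂ)
    (A : Matrix (Fin d₁) (Fin d₁) ℂ) :
    (ρ * (A ⊗ₖ (1 : Matrix (Fin d₂) (Fin d₂) ℂ))).trace =
      ((Matrix.of fun a b : Fin d₁ => ∑ c, ρ (a, c) (b, c)) * A).trace := by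
  simp only [Matrix.trace, Matrix.diag, Matrix.mul_apply, Matrix.of_apply,
    Matrix.kroneckerMap_apply, Matrix.one_apply, Fintype.sum_prod_type,
    mul_ite, mul_one, mul_zero, Finset.sum_ite_eq', Finset.mem_univ, if_true,
    Finset.sum_mul]
  exact Finset.sum_congr rfl fun a _ => Finset.sum_comm

private lemma ptrace2_mul (d₁ d₂ : ℕ) (ρ : Matrix (Fin d₁ × Fin d₂) (Fin d₁ × Fin d₂) ℂ)
    (B : Matrix (Fin d₂) (Fin d₂) ℂ) :
    (ρ * ((1 : Matrix (Fin d₁) (Fin d₁) ℂ) ⊗ₖ B)).trace =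
      ((Matrix.of fun a b : Fin d₂ => ∑ c, ρ (c, a) (c, b)) * B).trace := by
  simp only [Matrix.trace, Matrix.diag, Matrix.mul_apply, Matrix.of_apply,
    Matrix.kroneckerMap_apply, Matrix.one_apply, Fintype.sum_prod_type,
    ite_mul, one_mul, zero_mul, mul_ite, mul_zero, Finset.sum_ite_irrel, Finset.sum_const_zero,
    Finset.sum_ite_eq', Finset.mem_univ, if_true, Finset.sum_mul]
  exact Finset.sum_comm.trans (Finset.sum_congr rfl fun a _ => Finset.sum_comm)

private lemma ptrace1_trace (d₁ d₂ : ℕ) (ρ : Matrix (Fin d₁ × Fin d₂) (Fin d₁ × Fin d₂) ℂ) :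
    (Matrix.of fun a b : Fin d₁ => ∑ c, ρ (a, c) (b, c)).trace = ρ.trace := by
  simp [Matrix.trace, Fintype.sum_prod_type]

private lemma ptrace2_trace (d₁ d₂ : ℕ) (ρ : Matrix (Fin d₁ × Fin d₂) (Fin d₁ × Fin d₂) ℂ) :
    (Matrix.of fun a b : Fin d₂ => ∑ c, ρ (c, a) (c, b)).trace = ρ.trace := by
  simp only [Matrix.trace, Matrix.diag, Matrix.of_apply, Fintype.sum_prod_type]
  exact Finset.sum_comm

private lemma trace_real {n : Type*} [Fintype n] {ρ M : Matrix n n ℂ}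
    (hρ : ρ.IsHermitian) (hM : M.IsHermitian) :
    ((ρ * M).trace.re : ℂ) = (ρ * M).trace := by
  rw [← Complex.conj_eq_iff_re]
  calc (starRingEnd ℂ) (ρ * M).trace = (ρ * M)ᴴ.trace := (Matrix.trace_conjTranspose _).symm
    _ = (Mᴴ * ρᴴ).trace := by rw [Matrix.conjTranspose_mul]
    _ = (M * ρ).trace := by rw [hM.eq, hρ.eq]
    _ = (ρ * M).trace := Matrix.trace_mul_comm _ _

private lemma kron_isHermitian {d₁ d₂ : ℕ} {A : Matrix (Fin d₁) (Fin d₁) ℂ}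
    {B : Matrix (Fin d₂) (Fin d₂) ℂ} (hA : A.IsHermitian) (hB : B.IsHermitian) :
    (A ⊗ₖ B).IsHermitian := by
  ext ⟨a, b⟩ ⟨c, e⟩
  simp only [Matrix.conjTranspose_apply, Matrix.kroneckerMap_apply, star_mul']
  have h1 : star (A c a) = A a c := by rw [← Matrix.conjTranspose_apply, hA.eq]
  have h2 : star (B e b) = B b e := by rw [← Matrix.conjTranspose_apply, hB.eq]
  rw [h1, h2, mul_comm]

private lemma purity_le_one {n : Type*} [Fintype n] [DecidableEq n]
    {ρ : Matrix n n ℂ} (hρ : ρ.PosSemidef) (hρtr : ρ.trace = 1) :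
    (ρ * ρ).trace.re ≤ 1 := by
  have hH := hρ.1
  have hspec := hH.spectral_theorem
  rw [Unitary.conjStarAlgAut_apply] at hspec
  set U : Matrix n n ℂ := (Matrix.IsHermitian.eigenvectorUnitary hH : Matrix n n ℂ) with hU
  set D : Matrix n n ℂ := Matrix.diagonal (RCLike.ofReal ∘ hH.eigenvalues) with hD
  have hUU : star U * U = 1 := by
    rw [hU]
    exact Unitary.coe_star_mul_self hH.eigenvectorUnitary
  have htr : ρ.trace = ∑ i, (hH.eigenvalues i : ℂ) := by
    conv_lhs => rw [hspec]
    rw [Matrix.trace_mul_cycle, hUU, one_mul, hD]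
    simp [Matrix.trace_diagonal]
  have hsum : ∑ i, hH.eigenvalues i = 1 := by
    rw [hρtr] at htr
    have h := htr.symm
    push_cast at h
    exact_mod_cast h
  have htr2 : (ρ * ρ).trace = ∑ i, ((hH.eigenvalues i : ℂ)) ^ 2 := by
    have hmm : (U * D * star U) * (U * D * star U) = U * (D * D) * star U := by
      simp only [mul_assoc]
      rw [← mul_assoc (star U) U, hUU, one_mul]
    conv_lhs => rw [hspec]
    rw [hmm, Matrix.trace_mul_cycle, hUU, one_mul, hD]
    simp [Matrix.diagonal_mul_diagonal, Matrix.trace_diagonal, pow_two]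
  have hre : (ρ * ρ).trace.re = ∑ i, (hH.eigenvalues i) ^ 2 := by
    rw [htr2]
    simp [← Complex.ofReal_pow]
  rw [hre]
  calc ∑ i, (hH.eigenvalues i) ^ 2 ≤ ∑ i, hH.eigenvalues i := by
        refine Finset.sum_le_sum fun i _ => ?_
        have h0 := hρ.eigenvalues_nonneg i
        have h1 : hH.eigenvalues i ≤ 1 := by
          rw [← hsum]
          exact Finset.single_le_sum (fun j _ => hρ.eigenvalues_nonneg j) (Finset.mem_univ i)
        nlinarith
    _ = 1 := hsum

/-- For a density matrix `ρ` on `ℂ^{d₁} ⊗ ℂ^{d₂}` with 2-body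
correlation tensor `T_{ij} = tr(ρ (λ_i ⊗ μ_j))`, one has
`Σ_{ij} T_{ij}² ≤ 4(d₁d₂-1)/(d₁d₂)`, with equality iff `ρ` is a maximally
entangled pure state (pure with both reduced states maximally mixed). -/
theorem twoBody_correlation_norm_bound
    (d₁ d₂ : ℕ) (hd₁ : 2 ≤ d₁) (hd₂ : 2 ≤ d₂)
    (lam : Fin (d₁ ^ 2 - 1) → Matrix (Fin d₁) (Fin d₁) ℂ)
    (mu : Fin (d₂ ^ 2 - 1) → Matrix (Fin d₂) (Fin d₂) ℂ)
    (hlam_herm : ∀ i, (lam i).IsHermitian)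
    (hlam_tr : ∀ i, (lam i).trace = 0)
    (hlam_orth : ∀ m n, (lam m * lam n).trace = if m = n then 2 else 0)
    (hmu_herm : ∀ j, (mu j).IsHermitian)
    (hmu_tr : ∀ j, (mu j).trace = 0)
    (hmu_orth : ∀ m n, (mu m * mu n).trace = if m = n then 2 else 0)
    (ρ : Matrix (Fin d₁ × Fin d₂) (Fin d₁ × Fin d₂) ℂ)
    (hρ : ρ.PosSemidef) (hρtr : ρ.trace = 1) :
    (∑ i, ∑ j, ((ρ * (lam i ⊗ₖ mu j)).trace.re) ^ 2) ≤
        4 * ((d₁ : ℝ) * d₂ - 1) / ((d₁ : ℝ) * d₂) ∧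
    ((∑ i, ∑ j, ((ρ * (lam i ⊗ₖ mu j)).trace.re) ^ 2) =
        4 * ((d₁ : ℝ) * d₂ - 1) / ((d₁ : ℝ) * d₂) ↔
      ((ρ * ρ).trace = 1 ∧
        (Matrix.of fun a b : Fin d₁ => ∑ c, ρ (a, c) (b, c)) =
          ((d₁ : ℂ))⁻¹ • (1 : Matrix (Fin d₁) (Fin d₁) ℂ) ∧
        (Matrix.of fun a b : Fin d₂ => ∑ c, ρ (c, a) (c, b)) =
          ((d₂ : ℂ))⁻¹ • (1 : Matrix (Fin d₂) (Fin d₂) ℂ))) := by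
  classical
  have hd₁0 : (0 : ℝ) < d₁ := by positivity
  have hd₂0 : (0 : ℝ) < d₂ := by
    have : (0:ℕ) < d₂ := by omega
    exact_mod_cast this
  have hd₁0' : (0:ℝ) < (d₁:ℝ) := by
    have : (0:ℕ) < d₁ := by omega
    exact_mod_cast this
  obtain ⟨-, hsq⟩ := matrix_decomp
      (fun p : Option (Fin (d₁ ^ 2 - 1)) × Option (Fin (d₂ ^ 2 - 1)) =>
        (p.1.elim 1 lam) ⊗ₖ (p.2.elim 1 mu))
      (fun p => (p.1.elim (d₁ : ℂ) 2) * (p.2.elim (d₂ : ℂ) 2))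
      (by
        rintro ⟨k, l⟩
        dsimp only
        apply mul_ne_zero
        · cases k <;> simp <;> omega
        · cases l <;> simp <;> omega)
      (by
        rintro ⟨k, l⟩ ⟨k', l'⟩
        dsimp only
        rw [← Matrix.mul_kronecker_mul, Matrix.trace_kronecker,
          e_orth hd₁ lam hlam_tr hlam_orth, e_orth hd₂ mu hmu_tr hmu_orth]
        by_cases h1 : k = k' <;> by_cases h2 : l = l' <;>
          simp [h1, h2, Prod.ext_iff])
      (by
        rw [Fintype.card_prod, e_card hd₁, e_card hd₂, Fintype.card_prod,
          Fintype.card_fin, Fintype.card_fin]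
        ring)
      ρ
  rw [Fintype.sum_prod_type] at hsq
  simp only [Fintype.sum_option, Option.elim_none, Option.elim_some,
    Pi.ofNat_apply] at hsq
  have hρH := hρ.1
  obtain ⟨T, hTdef⟩ : ∃ T : Fin (d₁ ^ 2 - 1) → Fin (d₂ ^ 2 - 1) → ℝ,
      ∀ i j, T i j = (ρ * (lam i ⊗ₖ mu j)).trace.re := ⟨_, fun _ _ => rfl⟩
  obtain ⟨a, hadef⟩ : ∃ a : Fin (d₁ ^ 2 - 1) → ℝ,
      ∀ i, a i = (ρ * (lam i ⊗ₖ (1 : Matrix (Fin d₂) (Fin d₂) ℂ))).trace.re :=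
    ⟨_, fun _ => rfl⟩
  obtain ⟨b, hbdef⟩ : ∃ b : Fin (d₂ ^ 2 - 1) → ℝ,
      ∀ j, b j = (ρ * ((1 : Matrix (Fin d₁) (Fin d₁) ℂ) ⊗ₖ mu j)).trace.re :=
    ⟨_, fun _ => rfl⟩
  have hT : ∀ i j, (ρ * (lam i ⊗ₖ mu j)).trace = ((T i j : ℝ) : ℂ) := fun i j => by
    rw [hTdef]
    exact (trace_real hρH (kron_isHermitian (hlam_herm i) (hmu_herm j))).symm
  have ha : ∀ i, (ρ * (lam i ⊗ₖ (1 : Matrix (Fin d₂) (Fin d₂) ℂ))).trace = ((a i : ℝ) : ℂ) :=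
    fun i => by
      rw [hadef]
      exact (trace_real hρH (kron_isHermitian (hlam_herm i) Matrix.isHermitian_one)).symm
  have hb : ∀ j, (ρ * ((1 : Matrix (Fin d₁) (Fin d₁) ℂ) ⊗ₖ mu j)).trace = ((b j : ℝ) : ℂ) :=
    fun j => by
      rw [hbdef]
      exact (trace_real hρH (kron_isHermitian Matrix.isHermitian_one (hmu_herm j))).symm
  have h11 : (ρ * ((1 : Matrix (Fin d₁) (Fin d₁) ℂ) ⊗ₖ (1 : Matrix (Fin d₂) (Fin d₂) ℂ))).trace
      = 1 := by rw [Matrix.one_kronecker_one, Matrix.mul_one, hρtr]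
  simp only [hT, ha, hb, h11] at hsq
  have hkey : (ρ * ρ).trace =
      ((1 / ((d₁ : ℝ) * d₂) + (∑ j, b j ^ 2) / (2 * d₁) + (∑ i, a i ^ 2) / (2 * d₂)
        + (∑ i, ∑ j, T i j ^ 2) / 4 : ℝ) : ℂ) := by
    rw [hsq]
    push_cast
    rw [Finset.sum_add_distrib]
    simp only [← Finset.sum_div]
    ring
  have hre : (ρ * ρ).trace.re = 1 / ((d₁ : ℝ) * d₂) + (∑ j, b j ^ 2) / (2 * d₁)
      + (∑ i, a i ^ 2) / (2 * d₂) + (∑ i, ∑ j, T i j ^ 2) / 4 := by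
    rw [hkey, Complex.ofReal_re]
  have hpur := purity_le_one hρ hρtr
  have hgoalS : (∑ i, ∑ j, ((ρ * (lam i ⊗ₖ mu j)).trace.re) ^ 2) = ∑ i, ∑ j, T i j ^ 2 := by
    simp only [hTdef]
  rw [hgoalS]
  have hD0 : (0:ℝ) < (d₁:ℝ) * d₂ := by positivity
  have h4 : 4 * ((d₁:ℝ) * d₂ - 1) / ((d₁:ℝ) * d₂) = 4 - 4 * (1 / ((d₁:ℝ) * d₂)) := by
    field_simp
  have h1 : 0 ≤ (∑ j, b j ^ 2) / (2*(d₂:ℝ)) := by positivity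
  have h1' : 0 ≤ (∑ j, b j ^ 2) / (2*(d₁:ℝ)) := by positivity
  have h2 : 0 ≤ (∑ i, a i ^ 2) / (2*(d₂:ℝ)) := by positivity
  constructor
  · rw [h4]
    linarith [hpur, hre]
  constructor
  · intro heq
    rw [h4] at heq
    have hR1 : (ρ*ρ).trace.re = 1 := by linarith [hpur]
    have hBz : (∑ j, b j ^ 2) = 0 := by
      have hz : (∑ j, b j ^ 2)/(2*(d₁:ℝ)) = 0 := by linarith
      rcases div_eq_zero_iff.mp hz with h | h
      · exact h
      · exfalso; rw [h] at h1'; linarith [hd₁0]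
    have hAz : (∑ i, a i ^ 2) = 0 := by
      have hz : (∑ i, a i ^ 2)/(2*(d₂:ℝ)) = 0 := by linarith
      rcases div_eq_zero_iff.mp hz with h | h
      · exact h
      · exfalso; linarith [hd₂0]
    have hA0 : ∀ i, a i = 0 := fun i => by
      have := (Finset.sum_eq_zero_iff_of_nonneg
        (fun i _ => sq_nonneg (a i))).mp hAz i (Finset.mem_univ i)
      exact pow_eq_zero_iff (two_ne_zero) |>.mp this
    have hB0 : ∀ j, b j = 0 := fun j => by
      have := (Finset.sum_eq_zero_iff_of_nonneg
        (fun j _ => sq_nonneg (b j))).mp hBz j (Finset.mem_univ j)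
      exact pow_eq_zero_iff (two_ne_zero) |>.mp this
    refine ⟨?_, ?_, ?_⟩
    · rw [hkey, Complex.ofReal_eq_one]
      linarith [hre, hR1]
    · apply single_decomp hd₁ lam hlam_tr hlam_orth
      · rw [ptrace1_trace, hρtr]
      · intro i
        rw [← ptrace1_mul, ha i, hA0 i]
        norm_num
    · apply single_decomp hd₂ mu hmu_tr hmu_orth
      · rw [ptrace2_trace, hρtr]
      · intro j
        rw [← ptrace2_mul, hb j, hB0 j]
        norm_num
  · rintro ⟨hpure, hr1, hr2⟩
    have hA0 : ∀ i, a i = 0 := by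
      intro i
      have h := ptrace1_mul d₁ d₂ ρ (lam i)
      rw [hr1, ha i] at h
      have hz : ((d₁:ℂ)⁻¹ • (1 : Matrix (Fin d₁) (Fin d₁) ℂ) * lam i).trace = 0 := by
        rw [Matrix.smul_mul, Matrix.one_mul, Matrix.trace_smul, hlam_tr, smul_zero]
      rw [hz] at h
      exact_mod_cast h
    have hB0 : ∀ j, b j = 0 := by
      intro j
      have h := ptrace2_mul d₁ d₂ ρ (mu j)
      rw [hr2, hb j] at h
      have hz : ((d₂:ℂ)⁻¹ • (1 : Matrix (Fin d₂) (Fin d₂) ℂ) * mu j).trace = 0 := by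
        rw [Matrix.smul_mul, Matrix.one_mul, Matrix.trace_smul, hmu_tr, smul_zero]
      rw [hz] at h
      exact_mod_cast h
    have hR1 : (ρ*ρ).trace.re = 1 := by rw [hpure]; simp
    have hAz : ∑ i, a i ^ 2 = 0 := by simp [hA0]
    have hBz : ∑ j, b j ^ 2 = 0 := by simp [hB0]
    rw [hAz, hBz] at hre
    rw [h4]
    simp only [zero_div, add_zero] at hre
    rw [hR1] at hre
    linarith [hre]
end

section
/- A pure state ρ = |ψ⟩⟨ψ| on ℂ^{d₁} ⊗ ℂ^{d₂} is a product state (i.e. |ψ⟩ = |ψ₁⟩ ⊗ |ψ₂⟩ for some unit vectors ψ₁ ∈ ℂ^{d₁}, ψ₂ ∈ ℂ^{d₂}) if and only if its 2-body correlation tensor factorizes into its 1-body correlation tensors, i.e. tr(ρ (λ_i ⊗ μ_j)) = tr(ρ (λ_i ⊗ 𝕀)) · tr(ρ (𝕀 ⊗ μ_j)) for all i = 1,…,d₁²−1 and j = 1,…,d₂²−1. -/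
open Matrix BigOperators Kronecker

lemma aux_trace_vecMulVec {n : Type*} [Fintype n] (ψ : n → ℂ) (M : Matrix n n ℂ) :
    (vecMulVec ψ (star ψ) * M).trace = ∑ x, ∑ y, ψ x * (starRingEnd ℂ) (ψ y) * M y x := by
  simp [Matrix.trace, Matrix.mul_apply, vecMulVec_apply, Matrix.diag, Pi.star_apply, mul_assoc]

lemma aux_tr_EE {d₁ d₂ : ℕ} (ψ : Fin d₁ × Fin d₂ → ℂ) (a a' : Fin d₁) (b b' : Fin d₂) :
    (vecMulVec ψ (star ψ) * (Matrix.single a' a (1:ℂ) ⊗ₖ Matrix.single b' b (1:ℂ))).trace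
      = ψ (a, b) * (starRingEnd ℂ) (ψ (a', b')) := by
  rw [aux_trace_vecMulVec]
  simp [Fintype.sum_prod_type, Matrix.single, Matrix.kroneckerMap_apply, ite_and,
    Finset.sum_ite_eq, Finset.sum_ite_eq']

lemma aux_tr_EI {d₁ d₂ : ℕ} (ψ : Fin d₁ × Fin d₂ → ℂ) (a a' : Fin d₁) :
    (vecMulVec ψ (star ψ) * (Matrix.single a' a (1:ℂ) ⊗ₖ (1 : Matrix (Fin d₂) (Fin d₂) ℂ))).trace
      = ∑ c, ψ (a, c) * (starRingEnd ℂ) (ψ (a', c)) := by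
  rw [aux_trace_vecMulVec]
  simp [Fintype.sum_prod_type, Matrix.single, Matrix.kroneckerMap_apply, Matrix.one_apply, ite_and,
    Finset.sum_ite_eq, Finset.sum_ite_eq']

lemma aux_tr_IE {d₁ d₂ : ℕ} (ψ : Fin d₁ × Fin d₂ → ℂ) (b b' : Fin d₂) :
    (vecMulVec ψ (star ψ) * ((1 : Matrix (Fin d₁) (Fin d₁) ℂ) ⊗ₖ Matrix.single b' b (1:ℂ))).trace
      = ∑ e, ψ (e, b) * (starRingEnd ℂ) (ψ (e, b')) := by
  rw [aux_trace_vecMulVec]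
  simp [Fintype.sum_prod_type, Matrix.single, Matrix.kroneckerMap_apply, Matrix.one_apply, ite_and,
    Finset.sum_ite_eq, Finset.sum_ite_eq']

lemma aux_span_top (d : ℕ) (hd : 1 ≤ d)
    (v : Fin (d ^ 2 - 1) → Matrix (Fin d) (Fin d) ℂ)
    (htr : ∀ i, (v i).trace = 0)
    (horth : ∀ m n, (v m * v n).trace = if m = n then 2 else 0) :
    Submodule.span ℂ ({(1 : Matrix (Fin d) (Fin d) ℂ)} ∪ Set.range v) = ⊤ := by
  have hindep : LinearIndependent ℂ v := by
    rw [linearIndependent_iff']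
    intro s g hg m hm
    have h2 : ((∑ i ∈ s, g i • v i) * v m).trace = 2 * g m := by
      rw [Finset.sum_mul]
      simp only [smul_mul_assoc, Matrix.trace_sum, Matrix.trace_smul, horth]
      rw [Finset.sum_eq_single m]
      · simp [smul_eq_mul]; ring
      · intro b _ hb; simp [hb]
      · intro h; exact absurd hm h
    rw [hg] at h2
    simpa using h2.symm
  set K := LinearMap.ker (Matrix.traceLinearMap (Fin d) ℂ ℂ) with hK
  have hsurj : LinearMap.range (Matrix.traceLinearMap (Fin d) ℂ ℂ) = ⊤ := by
    rw [LinearMap.range_eq_top]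
    intro c
    refine ⟨Matrix.single ⟨0, by omega⟩ ⟨0, by omega⟩ c, ?_⟩
    simp [Matrix.traceLinearMap]
  have hfr : Module.finrank ℂ K = d ^ 2 - 1 := by
    have := LinearMap.finrank_range_add_finrank_ker (Matrix.traceLinearMap (Fin d) ℂ ℂ)
    rw [hsurj, finrank_top, Module.finrank_self, Module.finrank_matrix] at this
    simp only [Fintype.card_fin, Module.finrank_self, mul_one] at this
    rw [← hK] at this
    rw [pow_two]
    omega
  have hmem : ∀ i, v i ∈ K := fun i => by rw [hK]; simpa [Matrix.traceLinearMap] using htr i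
  set w : Fin (d ^ 2 - 1) → K := fun i => ⟨v i, hmem i⟩ with hw
  have hwind : LinearIndependent ℂ w := by
    have : v = K.subtype ∘ w := rfl
    rw [this] at hindep
    exact LinearIndependent.of_comp _ hindep
  have hwspan : Submodule.span ℂ (Set.range w) = ⊤ :=
    hwind.span_eq_top_of_card_eq_finrank' (by simp [hfr])
  have hvspan : Submodule.span ℂ (Set.range v) = K := by
    have := congrArg (Submodule.map K.subtype) hwspan
    rw [Submodule.map_span, ← Set.range_comp] at this
    have h2 : K.subtype ∘ w = v := rfl
    rw [h2, Submodule.map_top, Submodule.range_subtype] at this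
    exact this
  rw [eq_top_iff]
  intro M _
  have hdc : (d : ℂ) ≠ 0 := by
    simp only [ne_eq, Nat.cast_eq_zero]; omega
  have hdecomp : M = (M.trace / d) • (1 : Matrix (Fin d) (Fin d) ℂ) +
      (M - (M.trace / d) • 1) := by abel
  rw [hdecomp]
  refine Submodule.add_mem _ (Submodule.smul_mem _ _ (Submodule.subset_span (Or.inl rfl))) ?_
  have : M - (M.trace / d) • 1 ∈ K := by
    simp only [hK, LinearMap.mem_ker, Matrix.traceLinearMap_apply, Matrix.trace_sub,
      Matrix.trace_smul, Matrix.trace_one, Fintype.card_fin, smul_eq_mul]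
    field_simp
    simp
  rw [← hvspan] at this
  exact Submodule.span_mono Set.subset_union_right this

/-- A pure state `ρ = |ψ⟩⟨ψ|` on `ℂ^{d₁} ⊗ ℂ^{d₂}` is a product
state iff its 2-body correlation tensor factorizes into its 1-body correlation
tensors: `tr(ρ(λ_i ⊗ μ_j)) = tr(ρ(λ_i ⊗ 𝕀)) · tr(ρ(𝕀 ⊗ μ_j))` for all `i, j`. -/
theorem pure_product_iff_correlation_factorizes
    (d₁ d₂ : ℕ) (hd₁ : 2 ≤ d₁) (hd₂ : 2 ≤ d₂)
    (lam : Fin (d₁ ^ 2 - 1) → Matrix (Fin d₁) (Fin d₁) ℂ)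
    (mu : Fin (d₂ ^ 2 - 1) → Matrix (Fin d₂) (Fin d₂) ℂ)
    (hlam_herm : ∀ i, (lam i).IsHermitian)
    (hlam_tr : ∀ i, (lam i).trace = 0)
    (hlam_orth : ∀ m n, (lam m * lam n).trace = if m = n then 2 else 0)
    (hmu_herm : ∀ j, (mu j).IsHermitian)
    (hmu_tr : ∀ j, (mu j).trace = 0)
    (hmu_orth : ∀ m n, (mu m * mu n).trace = if m = n then 2 else 0)
    (ψ : Fin d₁ × Fin d₂ → ℂ) (hψ : ∑ x, Complex.normSq (ψ x) = 1)
    (ρ : Matrix (Fin d₁ × Fin d₂) (Fin d₁ × Fin d₂) ℂ)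
    (hρ : ρ = Matrix.vecMulVec ψ (star ψ)) :
    (∃ (ψ₁ : Fin d₁ → ℂ) (ψ₂ : Fin d₂ → ℂ),
        (∑ x, Complex.normSq (ψ₁ x) = 1) ∧ (∑ x, Complex.normSq (ψ₂ x) = 1) ∧
        ψ = fun p => ψ₁ p.1 * ψ₂ p.2) ↔
    (∀ i j, (ρ * (lam i ⊗ₖ mu j)).trace =
        (ρ * (lam i ⊗ₖ (1 : Matrix (Fin d₂) (Fin d₂) ℂ))).trace *
        (ρ * ((1 : Matrix (Fin d₁) (Fin d₁) ℂ) ⊗ₖ mu j)).trace) := by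
  subst hρ
  have htrρ : (Matrix.vecMulVec ψ (star ψ)).trace = 1 := by
    simp only [Matrix.trace, Matrix.diag, vecMulVec_apply, Pi.star_apply]
    have h : ∀ x, ψ x * star (ψ x) = (Complex.normSq (ψ x) : ℂ) := fun x => Complex.mul_conj _
    simp_rw [h]
    norm_cast
  constructor
  · rintro ⟨ψ₁, ψ₂, h1, h2, rfl⟩
    intro i j
    have hρprod : vecMulVec (fun p : Fin d₁ × Fin d₂ => ψ₁ p.1 * ψ₂ p.2)
        (star fun p : Fin d₁ × Fin d₂ => ψ₁ p.1 * ψ₂ p.2)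
        = vecMulVec ψ₁ (star ψ₁) ⊗ₖ vecMulVec ψ₂ (star ψ₂) := by
      ext ⟨x1, x2⟩ ⟨y1, y2⟩
      simp [vecMulVec_apply, Matrix.kroneckerMap_apply, Pi.star_apply]
      ring
    have ht1 : (vecMulVec ψ₁ (star ψ₁)).trace = 1 := by
      simp only [Matrix.trace, Matrix.diag, vecMulVec_apply, Pi.star_apply]
      have h : ∀ x, ψ₁ x * star (ψ₁ x) = (Complex.normSq (ψ₁ x) : ℂ) := fun x => Complex.mul_conj _
      simp_rw [h]; norm_cast
    have ht2 : (vecMulVec ψ₂ (star ψ₂)).trace = 1 := by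
      simp only [Matrix.trace, Matrix.diag, vecMulVec_apply, Pi.star_apply]
      have h : ∀ x, ψ₂ x * star (ψ₂ x) = (Complex.normSq (ψ₂ x) : ℂ) := fun x => Complex.mul_conj _
      simp_rw [h]; norm_cast
    rw [hρprod, ← Matrix.mul_kronecker_mul, ← Matrix.mul_kronecker_mul,
      ← Matrix.mul_kronecker_mul, Matrix.trace_kronecker, Matrix.trace_kronecker,
      Matrix.trace_kronecker, Matrix.mul_one, Matrix.mul_one, ht1, ht2]
    ring
  · intro hcorr
    set ρ := Matrix.vecMulVec ψ (star ψ) with hρ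
    have htr11 : (ρ * ((1 : Matrix (Fin d₁) (Fin d₁) ℂ) ⊗ₖ
        (1 : Matrix (Fin d₂) (Fin d₂) ℂ))).trace = 1 := by
      rw [Matrix.one_kronecker_one, Matrix.mul_one, htrρ]
    -- the bilinear "correlation defect" map
    set G : Matrix (Fin d₁) (Fin d₁) ℂ →ₗ[ℂ] Matrix (Fin d₂) (Fin d₂) ℂ →ₗ[ℂ] ℂ :=
      LinearMap.mk₂ ℂ
        (fun M N => (ρ * (M ⊗ₖ N)).trace -
          (ρ * (M ⊗ₖ (1 : Matrix (Fin d₂) (Fin d₂) ℂ))).trace *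
          (ρ * ((1 : Matrix (Fin d₁) (Fin d₁) ℂ) ⊗ₖ N)).trace)
        (by
          intro M M' N
          simp only [Matrix.add_kronecker, Matrix.mul_add, Matrix.trace_add]
          ring)
        (by
          intro c M N
          simp only [Matrix.smul_kronecker, Matrix.mul_smul, Matrix.trace_smul, smul_eq_mul]
          ring)
        (by
          intro M N N'
          simp only [Matrix.kronecker_add, Matrix.mul_add, Matrix.trace_add]
          ring)
        (by
          intro c M N
          simp only [Matrix.kronecker_smul, Matrix.mul_smul, Matrix.trace_smul, smul_eq_mul]
          ring) with hG
    have hGapp : ∀ M N, G M N = (ρ * (M ⊗ₖ N)).trace -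
          (ρ * (M ⊗ₖ (1 : Matrix (Fin d₂) (Fin d₂) ℂ))).trace *
          (ρ * ((1 : Matrix (Fin d₁) (Fin d₁) ℂ) ⊗ₖ N)).trace := fun M N => rfl
    have hin : ∀ M, (∀ N ∈ ({1} ∪ Set.range mu :
        Set (Matrix (Fin d₂) (Fin d₂) ℂ)), G M N = 0) → G M = 0 := by
      intro M h
      have hle : Submodule.span ℂ ({1} ∪ Set.range mu) ≤ LinearMap.ker (G M) :=
        Submodule.span_le.2 fun N hN => LinearMap.mem_ker.2 (h N hN)
      rw [aux_span_top d₂ (by omega) mu hmu_tr hmu_orth] at hle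
      exact LinearMap.ext fun N => LinearMap.mem_ker.1 (hle Submodule.mem_top)
    have hgen : ∀ M ∈ ({1} ∪ Set.range lam :
        Set (Matrix (Fin d₁) (Fin d₁) ℂ)), G M = 0 := by
      rintro M (rfl | ⟨i, rfl⟩)
      · apply hin
        rintro N (rfl | ⟨j, rfl⟩)
        · rw [hGapp, htr11]; ring
        · rw [hGapp, htr11]; ring
      · apply hin
        rintro N (rfl | ⟨j, rfl⟩)
        · rw [hGapp, htr11]; ring
        · rw [hGapp]
          exact sub_eq_zero.2 (hcorr i j)
    have key : ∀ (M : Matrix (Fin d₁) (Fin d₁) ℂ) (N : Matrix (Fin d₂) (Fin d₂) ℂ),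
        (ρ * (M ⊗ₖ N)).trace =
          (ρ * (M ⊗ₖ (1 : Matrix (Fin d₂) (Fin d₂) ℂ))).trace *
          (ρ * ((1 : Matrix (Fin d₁) (Fin d₁) ℂ) ⊗ₖ N)).trace := by
      intro M N
      have hle : Submodule.span ℂ ({1} ∪ Set.range lam) ≤ LinearMap.ker G :=
        Submodule.span_le.2 fun M' hM' => LinearMap.mem_ker.2 (hgen M' hM')
      rw [aux_span_top d₁ (by omega) lam hlam_tr hlam_orth] at hle
      have hGM : G M = 0 := LinearMap.mem_ker.1 (hle Submodule.mem_top)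
      have := congrFun (congrArg DFunLike.coe hGM) N
      rw [hGapp] at this
      simp only [LinearMap.zero_apply] at this
      exact sub_eq_zero.1 this
    obtain ⟨p₀, hp₀⟩ : ∃ p, ψ p ≠ 0 := by
      by_contra h
      push_neg at h
      simp [h] at hψ
    have hkey : ∀ a b, ψ (a, b) * (starRingEnd ℂ) (ψ p₀) =
        (∑ c, ψ (a, c) * (starRingEnd ℂ) (ψ (p₀.1, c))) *
        (∑ e, ψ (e, b) * (starRingEnd ℂ) (ψ (e, p₀.2))) := by
      intro a b
      have h := key (Matrix.single p₀.1 a 1) (Matrix.single p₀.2 b 1)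
      rw [hρ, aux_tr_EE, aux_tr_EI, aux_tr_IE] at h
      simpa using h
    set z := (starRingEnd ℂ) (ψ p₀) with hzdef
    have hz : z ≠ 0 := by simpa [hzdef] using hp₀
    set f : Fin d₁ → ℂ := fun a => (∑ c, ψ (a, c) * (starRingEnd ℂ) (ψ (p₀.1, c))) / z with hfdef
    set g : Fin d₂ → ℂ := fun b => ∑ e, ψ (e, b) * (starRingEnd ℂ) (ψ (e, p₀.2)) with hgdef
    have hfg : ∀ a b, ψ (a, b) = f a * g b := by
      intro a b
      rw [hfdef, hgdef]
      simp only
      rw [div_mul_eq_mul_div, ← hkey a b, mul_div_assoc, div_self hz, mul_one]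
    have hfactor : (∑ a, Complex.normSq (f a)) * (∑ b, Complex.normSq (g b)) = 1 := by
      rw [Finset.sum_mul_sum, ← hψ, Fintype.sum_prod_type]
      refine Finset.sum_congr rfl fun a _ => Finset.sum_congr rfl fun b _ => ?_
      rw [hfg a b, Complex.normSq_mul]
    have hcpos : 0 < ∑ a, Complex.normSq (f a) := by
      rcases (Finset.sum_nonneg fun a _ => Complex.normSq_nonneg (f a)).lt_or_eq with h | h
      · exact h
      · exfalso; rw [← h] at hfactor; simp at hfactor
    set c := ∑ a, Complex.normSq (f a) with hcdef
    set s := Real.sqrt c with hsdef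
    have hs0 : (s : ℂ) ≠ 0 := by
      simp only [ne_eq, Complex.ofReal_eq_zero, hsdef]
      positivity
    have hss : s * s = c := Real.mul_self_sqrt hcpos.le
    refine ⟨fun a => f a / (s : ℂ), fun b => (s : ℂ) * g b, ?_, ?_, ?_⟩
    · have h1 : ∀ a, Complex.normSq (f a / (s : ℂ)) = Complex.normSq (f a) / c := by
        intro a
        rw [Complex.normSq_div, Complex.normSq_ofReal, hss]
      simp_rw [h1]
      rw [← Finset.sum_div, ← hcdef, div_self (ne_of_gt hcpos)]
    · have h2 : ∀ b, Complex.normSq ((s : ℂ) * g b) = c * Complex.normSq (g b) := by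
        intro b
        rw [Complex.normSq_mul, Complex.normSq_ofReal, hss]
      simp_rw [h2]
      rw [← Finset.mul_sum]
      exact hfactor
    · funext p
      have hp : ψ p = ψ (p.1, p.2) := by rw [Prod.mk.eta]
      show ψ p = f p.1 / (s : ℂ) * ((s : ℂ) * g p.2)
      rw [hp, hfg]
      field_simp
end

section
/- Let ρ = |Ψ⟩⟨Ψ| be a pure state on (ℂ^d)^{⊗3} that is a product across some bipartition of the three subsystems, i.e. (up to a permutation of the factors) |Ψ⟩ = |φ⟩ ⊗ |χ⟩ with φ a unit vector in one factor ℂ^d and χ a unit vector in the tensor product of the other two. Then its full correlation tensor T_{i₁i₂i₃} = tr(ρ (λ_{i₁} ⊗ λ_{i₂} ⊗ λ_{i₃})), i_j ∈ {1,…,d²−1}, satisfies ‖T‖ := (Σ_{i₁i₂i₃} T_{i₁i₂i₃}²)^{1/2} ≤ √(8(d−1)(d²−1)/d³). -/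
open Matrix BigOperators

noncomputable section

/-- The tensor (Kronecker) product of `n` local operators, acting on
`(ℂ^d)^{⊗n}` with the Hilbert space indexed by functions `Fin n → Fin d`. -/
def tensorOp {n d : ℕ} (A : Fin n → Matrix (Fin d) (Fin d) ℂ) :
    Matrix (Fin n → Fin d) (Fin n → Fin d) ℂ :=
  fun r c => ∏ j, A j (r j) (c j)

open scoped Kronecker

lemma trace_pure_mul {ι : Type*} [Fintype ι] (v : ι → ℂ) (M : Matrix ι ι ℂ) :
    (vecMulVec v (star v) * M).trace = ∑ x, ∑ y, v x * star (v y) * M y x := by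
  simp [Matrix.trace, Matrix.diag, Matrix.mul_apply, Matrix.vecMulVec_apply, mul_assoc]

lemma fin3_vec {α : Type*} (j : Fin 3) (r : Fin 3 → α) (m : Fin 3) :
    ![r j, r (j+1), r (j+2)] m = r (j + m) := by
  fin_cases j <;> fin_cases m <;> rfl

def trip {α : Type*} (j : Fin 3) : (α × α × α) ≃ (Fin 3 → α) where
  toFun t := fun k => ![t.1, t.2.1, t.2.2] (k - j)
  invFun r := (r j, r (j+1), r (j+2))
  left_inv t := by
    have h0 : j - j = (0 : Fin 3) := sub_self j
    have h1 : j + 1 - j = (1 : Fin 3) := by rw [add_comm, add_sub_cancel_right]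
    have h2 : j + 2 - j = (2 : Fin 3) := by rw [add_comm, add_sub_cancel_right]
    simp only [h0, h1, h2]
    rfl
  right_inv r := by
    funext k
    show ![r j, r (j+1), r (j+2)] (k - j) = r k
    rw [fin3_vec j r (k - j), add_comm, sub_add_cancel]

lemma trip_apply_j {α : Type*} (j : Fin 3) (t : α × α × α) :
    (trip j t) j = t.1 := by simp [trip, sub_self]

lemma trip_apply_j1 {α : Type*} (j : Fin 3) (t : α × α × α) :
    (trip j t) (j + 1) = t.2.1 := by
  have h1 : j + 1 - j = (1 : Fin 3) := by rw [add_comm, add_sub_cancel_right]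
  simp [trip, h1]

lemma trip_apply_j2 {α : Type*} (j : Fin 3) (t : α × α × α) :
    (trip j t) (j + 2) = t.2.2 := by
  have h2 : j + 2 - j = (2 : Fin 3) := by rw [add_comm, add_sub_cancel_right]
  simp [trip, h2]

lemma prod3 (j : Fin 3) (f : Fin 3 → ℂ) : ∏ k, f k = f j * (f (j+1) * f (j+2)) := by
  fin_cases j <;> simp [Fin.prod_univ_three] <;> ring

lemma sum_prod_factor {α β : Type*} [Fintype α] [Fintype β] (f : α → α → ℂ) (g : β → β → ℂ) :
    ∑ t : α × β, ∑ s : α × β, f t.1 s.1 * g t.2 s.2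
      = (∑ x, ∑ y, f x y) * (∑ p, ∑ q, g p q) := by
  have h1 : ∀ t : α × β, (∑ s : α × β, f t.1 s.1 * g t.2 s.2)
      = (∑ y, f t.1 y) * (∑ q, g t.2 q) := by
    intro t
    rw [Finset.sum_mul_sum, Fintype.sum_prod_type]
  simp only [h1]
  rw [Finset.sum_mul_sum, Fintype.sum_prod_type]

lemma factor_trace {d : ℕ} (j : Fin 3) (φ : Fin d → ℂ) (χ : Fin d × Fin d → ℂ)
    (Ψ : (Fin 3 → Fin d) → ℂ)
    (hprod : ∀ r, Ψ r = φ (r j) * χ (r (j + 1), r (j + 2)))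
    (A : Fin 3 → Matrix (Fin d) (Fin d) ℂ) :
    (vecMulVec Ψ (star Ψ) * tensorOp A).trace
      = (vecMulVec φ (star φ) * A j).trace
        * (vecMulVec χ (star χ) * (A (j+1) ⊗ₖ A (j+2))).trace := by
  rw [trace_pure_mul, trace_pure_mul, trace_pure_mul]
  have eΨ : ∀ t : Fin d × Fin d × Fin d, Ψ (trip j t) = φ t.1 * χ t.2 := by
    intro t
    rw [hprod, trip_apply_j, trip_apply_j1, trip_apply_j2]
  have eP : ∀ (t s : Fin d × Fin d × Fin d),
      tensorOp A (trip j s) (trip j t)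
        = A j (trip j s j) (trip j t j)
          * (A (j+1) ((trip j s) (j+1)) ((trip j t) (j+1))
            * A (j+2) ((trip j s) (j+2)) ((trip j t) (j+2))) := by
    intro t s
    exact prod3 j _
  calc (∑ x, ∑ y, Ψ x * star (Ψ y) * tensorOp A y x)
      = ∑ t : Fin d × Fin d × Fin d, ∑ s : Fin d × Fin d × Fin d,
          Ψ (trip j t) * star (Ψ (trip j s)) * tensorOp A (trip j s) (trip j t) := by
        rw [← Equiv.sum_comp (trip j) (fun x => ∑ y, Ψ x * star (Ψ y) * tensorOp A y x)]
        refine Finset.sum_congr rfl fun t _ => ?_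
        rw [← Equiv.sum_comp (trip j)
          (fun y => Ψ (trip j t) * star (Ψ y) * tensorOp A y (trip j t))]
    _ = ∑ t : Fin d × (Fin d × Fin d), ∑ s : Fin d × (Fin d × Fin d),
          (φ t.1 * star (φ s.1) * A j s.1 t.1)
            * (χ t.2 * star (χ s.2) * (A (j+1) s.2.1 t.2.1 * A (j+2) s.2.2 t.2.2)) := by
        refine Finset.sum_congr rfl fun t _ => Finset.sum_congr rfl fun s _ => ?_
        rw [eΨ, eΨ, eP, trip_apply_j, trip_apply_j, trip_apply_j1, trip_apply_j1,
          trip_apply_j2, trip_apply_j2]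
        simp only [star_mul']
        ring
    _ = (∑ x, ∑ y, φ x * star (φ y) * A j y x)
          * (∑ p : Fin d × Fin d, ∑ q : Fin d × Fin d,
              χ p * star (χ q) * (A (j+1) q.1 p.1 * A (j+2) q.2 p.2)) :=
        sum_prod_factor (fun x y => φ x * star (φ y) * A j y x)
          (fun p q => χ p * star (χ q) * (A (j+1) q.1 p.1 * A (j+2) q.2 p.2))
    _ = (∑ x, ∑ y, φ x * star (φ y) * A j y x)
          * (∑ p : Fin d × Fin d, ∑ q : Fin d × Fin d,
              χ p * star (χ q) * (A (j+1) ⊗ₖ A (j+2)) q p) := by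
        refine congrArg _ (Finset.sum_congr rfl fun p _ => Finset.sum_congr rfl fun q _ => ?_)
        rw [Matrix.kroneckerMap_apply]

local notation "⟪" x ", " y "⟫" => @inner ℂ _ _ x y

def toE {ι : Type*} [Fintype ι] (A : Matrix ι ι ℂ) : EuclideanSpace ℂ (ι × ι) :=
  (WithLp.equiv 2 ((ι × ι) → ℂ)).symm (fun p => A p.1 p.2)

lemma inner_toE {ι : Type*} [Fintype ι] (A B : Matrix ι ι ℂ) (hA : A.IsHermitian) :
    ⟪toE A, toE B⟫ = (A * B).trace := by
  simp only [toE, PiLp.inner_apply, RCLike.inner_apply, WithLp.equiv_symm_apply, PiLp.toLp_apply]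
  rw [Matrix.trace, Fintype.sum_prod_type]
  rw [Finset.sum_comm]
  refine Finset.sum_congr rfl fun q _ => ?_
  simp only [Matrix.diag, Matrix.mul_apply]
  refine Finset.sum_congr rfl fun p _ => ?_
  rw [← hA.apply p q]
  simp [mul_comm]

lemma norm_sq_toE {ι : Type*} [Fintype ι] (A : Matrix ι ι ℂ) :
    ‖toE A‖ ^ 2 = ∑ p : ι × ι, Complex.normSq (A p.1 p.2) := by
  have h := @inner_self_eq_norm_sq ℂ _ _ _ _ (toE A)
  rw [← h]
  simp only [toE, PiLp.inner_apply, RCLike.inner_apply, WithLp.equiv_symm_apply, PiLp.toLp_apply]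
  rw [map_sum]
  refine Finset.sum_congr rfl fun p _ => ?_
  rw [Complex.mul_conj]
  simp

lemma matrix_bessel {ι κ : Type*} [Fintype ι] [DecidableEq ι] [Nonempty ι]
    [Fintype κ] [DecidableEq κ]
    (K : ℝ) (hK : 0 < K) (L : κ → Matrix ι ι ℂ)
    (hherm : ∀ i, (L i).IsHermitian) (htr : ∀ i, (L i).trace = 0)
    (horth : ∀ p q, (L p * L q).trace = if p = q then (K : ℂ) else 0)
    (σ : Matrix ι ι ℂ) (hσ : σ.IsHermitian) (htrσ : σ.trace = 1)
    (htrσ2 : (σ * σ).trace = 1) :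
    ∑ i, Complex.normSq ((σ * L i).trace) ≤ K * (1 - 1 / (Fintype.card ι)) := by
  set c : ℝ := (Fintype.card ι : ℝ) with hcdef
  have hc0 : 0 < c := by
    have := Fintype.card_pos (α := ι)
    positivity
  set M : Matrix ι ι ℂ := σ - ((c⁻¹ : ℝ) : ℂ) • (1 : Matrix ι ι ℂ) with hMdef
  have hMherm : M.IsHermitian := by
    unfold M
    unfold Matrix.IsHermitian
    rw [Matrix.conjTranspose_sub, Matrix.conjTranspose_smul, hσ.eq,
      Matrix.conjTranspose_one]
    congr 1
    simp [Complex.star_def, Complex.conj_ofReal]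
  have hcard : ((Fintype.card ι : ℕ) : ℂ) = ((c : ℝ) : ℂ) := by norm_cast
  have hML : ∀ i, (L i * M).trace = (σ * L i).trace := by
    intro i
    unfold M
    rw [Matrix.mul_sub, Matrix.trace_sub, Matrix.mul_smul, Matrix.trace_smul,
      Matrix.mul_one, htr, Matrix.trace_mul_comm]
    simp
  have hMM : (M * M).trace = ((1 - c⁻¹ : ℝ) : ℂ) := by
    unfold M
    have hcne : ((c : ℝ) : ℂ) ≠ 0 := by
      exact_mod_cast hc0.ne'
    rw [Matrix.sub_mul, Matrix.mul_sub, Matrix.mul_sub]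
    simp only [Matrix.mul_smul, Matrix.smul_mul, Matrix.mul_one, Matrix.one_mul, smul_smul,
      Matrix.trace_sub, Matrix.trace_smul, Matrix.trace_one, smul_eq_mul]
    rw [htrσ, htrσ2, hcard]
    push_cast
    field_simp
    ring
  set s : ℝ := (Real.sqrt K)⁻¹ with hsdef
  have hsqK : Real.sqrt K ≠ 0 := by positivity
  set w : κ → EuclideanSpace ℂ (ι × ι) := fun i => ((s : ℝ) : ℂ) • toE (L i) with hwdef
  have hw : Orthonormal ℂ w := by
    rw [orthonormal_iff_ite]
    intro p q
    unfold w
    rw [inner_smul_left, inner_smul_right, inner_toE _ _ (hherm p), horth]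
    rw [Complex.conj_ofReal]
    split_ifs with h
    · have hr : s * (s * K) = 1 := by
        rw [hsdef, ← mul_assoc, ← mul_inv, Real.mul_self_sqrt hK.le]
        exact inv_mul_cancel₀ hK.ne'
      calc ((s : ℝ) : ℂ) * (((s : ℝ) : ℂ) * ((K : ℝ) : ℂ)) = (((s * (s * K)) : ℝ) : ℂ) := by
            push_cast; ring
        _ = 1 := by rw [hr]; norm_num
    · simp
  have hb := hw.sum_inner_products_le (toE M) (s := Finset.univ)
  have hnorm : ‖toE M‖ ^ 2 = 1 - c⁻¹ := by
    rw [← inner_self_eq_norm_sq (𝕜 := ℂ), inner_toE _ _ hMherm, hMM]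
    simp
  have hterm : ∀ i, ‖⟪w i, toE M⟫‖ ^ 2 = K⁻¹ * Complex.normSq ((σ * L i).trace) := by
    intro i
    unfold w
    rw [inner_smul_left, inner_toE _ _ (hherm i), hML i]
    rw [Complex.conj_ofReal]
    rw [norm_mul, mul_pow]
    have h1 : ‖((s : ℝ) : ℂ)‖ ^ 2 = K⁻¹ := by
      rw [Complex.norm_real, Real.norm_eq_abs, sq_abs]
      rw [hsdef, ← Real.sqrt_inv]
      exact Real.sq_sqrt (by positivity)
    rw [h1]
    congr 1
    rw [Complex.sq_norm]
  rw [hnorm] at hb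
  have hsum : ∑ i ∈ Finset.univ, ‖⟪w i, toE M⟫‖ ^ 2
      = K⁻¹ * ∑ i, Complex.normSq ((σ * L i).trace) := by
    rw [Finset.mul_sum]
    exact Finset.sum_congr rfl fun i _ => hterm i
  rw [hsum] at hb
  calc ∑ i, Complex.normSq ((σ * L i).trace)
      = K * (K⁻¹ * ∑ i, Complex.normSq ((σ * L i).trace)) := by
        field_simp
    _ ≤ K * (1 - c⁻¹) := by
        apply mul_le_mul_of_nonneg_left hb hK.le
    _ = K * (1 - 1 / c) := by rw [one_div]

lemma pure_herm {ι : Type*} [Fintype ι] (v : ι → ℂ) :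
    (vecMulVec v (star v)).IsHermitian := by
  unfold Matrix.IsHermitian
  ext p q
  simp [Matrix.vecMulVec_apply, Matrix.conjTranspose_apply, mul_comm]

lemma pure_trace {ι : Type*} [Fintype ι] (v : ι → ℂ)
    (hv : ∑ x, Complex.normSq (v x) = 1) :
    (vecMulVec v (star v)).trace = 1 := by
  have : (vecMulVec v (star v)).trace = ∑ x, (Complex.normSq (v x) : ℂ) := by
    simp only [Matrix.trace, Matrix.diag, Matrix.vecMulVec_apply, Pi.star_apply]
    exact Finset.sum_congr rfl fun x _ => by
      rw [Complex.star_def, Complex.mul_conj]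
  rw [this]
  push_cast
  exact_mod_cast congrArg (Complex.ofReal) hv

lemma pure_trace_sq {ι : Type*} [Fintype ι] (v : ι → ℂ)
    (hv : ∑ x, Complex.normSq (v x) = 1) :
    (vecMulVec v (star v) * vecMulVec v (star v)).trace = 1 := by
  have e1 : (vecMulVec v (star v) * vecMulVec v (star v)).trace
      = ∑ x, ∑ y, (v x * star (v y)) * (v y * star (v x)) := by
    simp [Matrix.trace, Matrix.diag, Matrix.mul_apply, Matrix.vecMulVec_apply]
  rw [e1]
  have e2 : ∀ x y : ι, (v x * star (v y)) * (v y * star (v x))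
      = (Complex.normSq (v x) : ℂ) * (Complex.normSq (v y) : ℂ) := by
    intro x y
    rw [← Complex.mul_conj, ← Complex.mul_conj]
    simp only [Complex.star_def]
    ring
  calc ∑ x, ∑ y, (v x * star (v y)) * (v y * star (v x))
      = ∑ x, ∑ y, (Complex.normSq (v x) : ℂ) * (Complex.normSq (v y) : ℂ) :=
        Finset.sum_congr rfl fun x _ => Finset.sum_congr rfl fun y _ => e2 x y
    _ = (∑ x, (Complex.normSq (v x) : ℂ)) * (∑ y, (Complex.normSq (v y) : ℂ)) :=
        (Finset.sum_mul_sum _ _ _ _).symm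
    _ = 1 := by
        have : (∑ x, (Complex.normSq (v x) : ℂ)) = 1 := by
          exact_mod_cast congrArg (Complex.ofReal) hv
        rw [this, one_mul]

lemma sum3_mul_0 {γ : Type*} [Fintype γ] (a : γ → ℝ) (b : γ → γ → ℝ) :
    (∑ x, ∑ y, ∑ z, a x * b y z) = (∑ x, a x) * (∑ y, ∑ z, b y z) := by
  simp only [← Finset.mul_sum]
  rw [← Finset.sum_mul]

lemma sum3_mul_1 {γ : Type*} [Fintype γ] (a : γ → ℝ) (b : γ → γ → ℝ) :
    (∑ x, ∑ y, ∑ z, a y * b z x) = (∑ x, a x) * (∑ y, ∑ z, b y z) := by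
  have h1 : ∀ x, (∑ y, ∑ z, a y * b z x) = (∑ y, a y) * (∑ z, b z x) := by
    intro x
    simp only [← Finset.mul_sum]
    rw [← Finset.sum_mul]
  simp only [h1]
  rw [← Finset.mul_sum]
  congr 1
  exact Finset.sum_comm

lemma sum3_mul_2 {γ : Type*} [Fintype γ] (a : γ → ℝ) (b : γ → γ → ℝ) :
    (∑ x, ∑ y, ∑ z, a z * b x y) = (∑ x, a x) * (∑ y, ∑ z, b y z) := by
  have h1 : ∀ x y, (∑ z, a z * b x y) = (∑ z, a z) * b x y := by
    intro x y
    exact (Finset.sum_mul _ _ _).symm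
  simp only [h1, ← Finset.mul_sum]

/-- If `ρ = |Ψ⟩⟨Ψ|` is a pure state on `(ℂ^d)^{⊗3}` which is a
product across some bipartition `j | {j+1, j+2}` of the three subsystems
(this covers all three bipartitions, up to permutation of factors), then the
standard norm of its full correlation tensor satisfies
`‖T‖ ≤ √(8(d-1)(d²-1)/d³)`. -/
theorem biseparable_pure_full_correlation_norm_bound
    (d : ℕ) (hd : 2 ≤ d)
    (lam : Fin (d ^ 2 - 1) → Matrix (Fin d) (Fin d) ℂ)
    (hherm : ∀ i, (lam i).IsHermitian)
    (htraceless : ∀ i, (lam i).trace = 0)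
    (horth : ∀ m n, (lam m * lam n).trace = if m = n then 2 else 0)
    (Ψ : (Fin 3 → Fin d) → ℂ)
    (hΨunit : ∑ x, Complex.normSq (Ψ x) = 1)
    (j : Fin 3) (φ : Fin d → ℂ) (χ : Fin d × Fin d → ℂ)
    (hφ : ∑ x, Complex.normSq (φ x) = 1)
    (hχ : ∑ x, Complex.normSq (χ x) = 1)
    (hprod : ∀ r, Ψ r = φ (r j) * χ (r (j + 1), r (j + 2)))
    (ρ : Matrix (Fin 3 → Fin d) (Fin 3 → Fin d) ℂ)
    (hρ : ρ = Matrix.vecMulVec Ψ (star Ψ)) :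
    Real.sqrt (∑ i₁, ∑ i₂, ∑ i₃,
        ((ρ * tensorOp ![lam i₁, lam i₂, lam i₃]).trace.re) ^ 2) ≤
      Real.sqrt (8 * ((d : ℝ) - 1) * ((d : ℝ) ^ 2 - 1) / (d : ℝ) ^ 3) := by
  have hdR : (2 : ℝ) ≤ (d : ℝ) := by exact_mod_cast hd
  have hd0 : (0 : ℝ) < (d : ℝ) := by linarith
  haveI : Nonempty (Fin d) := ⟨⟨0, by omega⟩⟩
  subst hρ
  set σφ := vecMulVec φ (star φ) with hσφ
  set σχ := vecMulVec χ (star χ) with hσχ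
  set a : Fin (d ^ 2 - 1) → ℝ := fun m => Complex.normSq ((σφ * lam m).trace) with ha
  set b : Fin (d ^ 2 - 1) → Fin (d ^ 2 - 1) → ℝ :=
    fun m n => Complex.normSq ((σχ * (lam m ⊗ₖ lam n)).trace) with hb
  have hresq : ∀ z w : ℂ, ((z * w).re) ^ 2 ≤ Complex.normSq z * Complex.normSq w := by
    intro z w
    rw [← Complex.normSq_mul, Complex.normSq_apply]
    nlinarith [sq_nonneg (z * w).im]
  have hfac : ∀ i₁ i₂ i₃ : Fin (d ^ 2 - 1),
      ((vecMulVec Ψ (star Ψ) * tensorOp ![lam i₁, lam i₂, lam i₃]).trace.re) ^ 2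
        ≤ a (![i₁, i₂, i₃] j) * b (![i₁, i₂, i₃] (j+1)) (![i₁, i₂, i₃] (j+2)) := by
    intro i₁ i₂ i₃
    have hAk : ∀ k : Fin 3, (![lam i₁, lam i₂, lam i₃] : Fin 3 → Matrix (Fin d) (Fin d) ℂ) k
        = lam (![i₁, i₂, i₃] k) := by
      intro k
      fin_cases k <;> rfl
    have hft := factor_trace j φ χ Ψ hprod ![lam i₁, lam i₂, lam i₃]
    rw [hAk j, hAk (j+1), hAk (j+2)] at hft
    rw [hft]
    exact hresq _ _
  have hstep1 : (∑ i₁, ∑ i₂, ∑ i₃,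
      ((vecMulVec Ψ (star Ψ) * tensorOp ![lam i₁, lam i₂, lam i₃]).trace.re) ^ 2)
      ≤ ∑ i₁, ∑ i₂, ∑ i₃, a (![i₁, i₂, i₃] j) * b (![i₁, i₂, i₃] (j+1)) (![i₁, i₂, i₃] (j+2)) :=
    Finset.sum_le_sum fun i₁ _ => Finset.sum_le_sum fun i₂ _ =>
      Finset.sum_le_sum fun i₃ _ => hfac i₁ i₂ i₃
  have hsum_eq : (∑ i₁, ∑ i₂, ∑ i₃,
        a (![i₁, i₂, i₃] j) * b (![i₁, i₂, i₃] (j+1)) (![i₁, i₂, i₃] (j+2)))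
      = (∑ m, a m) * (∑ m, ∑ n, b m n) := by
    fin_cases j
    · exact sum3_mul_0 a b
    · exact sum3_mul_1 a b
    · exact sum3_mul_2 a b
  -- Bessel bound for the single-party factor
  have horth' : ∀ m n, (lam m * lam n).trace = if m = n then (((2:ℝ) : ℂ)) else 0 := by
    intro m n
    rw [horth]
    norm_num
  have hSa : (∑ m, a m) ≤ 2 * (1 - 1 / (d : ℝ)) := by
    have hB := matrix_bessel (ι := Fin d) 2 two_pos lam hherm htraceless horth'
      σφ (pure_herm φ) (pure_trace φ hφ) (pure_trace_sq φ hφ)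
    rwa [Fintype.card_fin] at hB
  -- Bessel bound for the two-party factor
  have hSb : (∑ m, ∑ n, b m n) ≤ 4 * (1 - 1 / ((d : ℝ) * d)) := by
    set L2 : Fin (d ^ 2 - 1) × Fin (d ^ 2 - 1) → Matrix (Fin d × Fin d) (Fin d × Fin d) ℂ :=
      fun p => lam p.1 ⊗ₖ lam p.2 with hL2
    have herm2 : ∀ p, (L2 p).IsHermitian := by
      intro p
      unfold Matrix.IsHermitian
      ext x y
      simp only [hL2, Matrix.conjTranspose_apply, Matrix.kroneckerMap_apply]
      rw [star_mul']
      rw [(hherm p.1).apply, (hherm p.2).apply]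
    have htr2 : ∀ p, (L2 p).trace = 0 := by
      intro p
      simp only [hL2]
      rw [Matrix.trace_kronecker, htraceless, zero_mul]
    have horth2 : ∀ p q, (L2 p * L2 q).trace = if p = q then (((4:ℝ) : ℂ)) else 0 := by
      intro p q
      simp only [hL2]
      rw [← Matrix.mul_kronecker_mul, Matrix.trace_kronecker, horth, horth]
      by_cases h1 : p.1 = q.1 <;> by_cases h2 : p.2 = q.2 <;>
        simp [Prod.ext_iff, h1, h2] <;> norm_num
    have hB := matrix_bessel (ι := Fin d × Fin d) 4 (by norm_num) L2 herm2 htr2 horth2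
      σχ (pure_herm χ) (pure_trace χ hχ) (pure_trace_sq χ hχ)
    have hcard2 : (Fintype.card (Fin d × Fin d) : ℝ) = (d : ℝ) * d := by
      rw [Fintype.card_prod, Fintype.card_fin]
      push_cast
      ring
    rw [hcard2] at hB
    have hsplit : (∑ p : Fin (d ^ 2 - 1) × Fin (d ^ 2 - 1),
        Complex.normSq ((σχ * L2 p).trace)) = ∑ m, ∑ n, b m n := by
      rw [Fintype.sum_prod_type]
    rwa [hsplit] at hB
  have hSa0 : 0 ≤ ∑ m, a m := Finset.sum_nonneg fun m _ => Complex.normSq_nonneg _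
  have hSb0 : 0 ≤ ∑ m, ∑ n, b m n :=
    Finset.sum_nonneg fun m _ => Finset.sum_nonneg fun n _ => Complex.normSq_nonneg _
  apply Real.sqrt_le_sqrt
  calc (∑ i₁, ∑ i₂, ∑ i₃,
        ((vecMulVec Ψ (star Ψ) * tensorOp ![lam i₁, lam i₂, lam i₃]).trace.re) ^ 2)
      ≤ (∑ m, a m) * (∑ m, ∑ n, b m n) := by rw [← hsum_eq]; exact hstep1
    _ ≤ (2 * (1 - 1 / (d : ℝ))) * (4 * (1 - 1 / ((d : ℝ) * d))) := by
        apply mul_le_mul hSa hSb hSb0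
        nlinarith
    _ = 8 * ((d : ℝ) - 1) * ((d : ℝ) ^ 2 - 1) / (d : ℝ) ^ 3 := by
        field_simp
        ring
end
end

section
/- (Theorem 1) Let ρ be a biseparable density matrix on (ℂ^d)^{⊗3}, i.e. a finite convex combination of pure states each of which is a tensor product across one of the three bipartitions 1|23, 2|13, 3|12 of the subsystems. Then its full correlation tensor T_{i₁i₂i₃} = tr(ρ (λ_{i₁} ⊗ λ_{i₂} ⊗ λ_{i₃})), i_j ∈ {1,…,d²−1}, satisfies ‖T‖ := (Σ_{i₁i₂i₃} T_{i₁i₂i₃}²)^{1/2} ≤ √(8(d−1)(d²−1)/d³). Consequently, any tripartite state with ‖T‖ > √(8(d−1)(d²−1)/d³) is genuinely multipartite entangled (not biseparable). -/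
open Matrix BigOperators

noncomputable section

open Kronecker

def EQ0 {d : ℕ} : (Fin 3 → Fin d) ≃ (Fin d × Fin d × Fin d) where
  toFun x := (x 0, x 1, x 2)
  invFun p := ![p.1, p.2.1, p.2.2]
  left_inv x := by funext i; fin_cases i <;> rfl
  right_inv p := rfl

def EQ1 {d : ℕ} : (Fin 3 → Fin d) ≃ (Fin d × Fin d × Fin d) where
  toFun x := (x 1, x 2, x 0)
  invFun p := ![p.2.2, p.1, p.2.1]
  left_inv x := by funext i; fin_cases i <;> rfl
  right_inv p := rfl

def EQ2 {d : ℕ} : (Fin 3 → Fin d) ≃ (Fin d × Fin d × Fin d) where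
  toFun x := (x 2, x 0, x 1)
  invFun p := ![p.2.1, p.2.2, p.1]
  left_inv x := by funext i; fin_cases i <;> rfl
  right_inv p := rfl

lemma kron_conjT {k l : Type*} (A : Matrix k k ℂ) (B : Matrix l l ℂ) :
    (A ⊗ₖ B)ᴴ = Aᴴ ⊗ₖ Bᴴ := by
  ext p q
  simp only [Matrix.conjTranspose_apply, Matrix.kroneckerMap_apply, star_mul']

lemma vmv_conjT {k : Type*} [Fintype k] (v : k → ℂ) :
    (Matrix.vecMulVec v (star v))ᴴ = Matrix.vecMulVec v (star v) := by
  ext x y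
  simp [Matrix.vecMulVec_apply, mul_comm]

lemma trace_real_s5 {k : Type*} [Fintype k] (v : k → ℂ) (B : Matrix k k ℂ) (hB : Bᴴ = B) :
    (Matrix.vecMulVec v (star v) * B).trace
      = (((Matrix.vecMulVec v (star v) * B).trace.re : ℝ) : ℂ) := by
  have h : (starRingEnd ℂ) ((Matrix.vecMulVec v (star v) * B).trace)
      = (Matrix.vecMulVec v (star v) * B).trace := by
    rw [starRingEnd_apply, ← Matrix.trace_conjTranspose, Matrix.conjTranspose_mul, hB,
      vmv_conjT, Matrix.trace_mul_comm]
  exact (Complex.conj_eq_iff_re.mp h).symm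

lemma tensorOp3 {d : ℕ} (A B C : Matrix (Fin d) (Fin d) ℂ) (x y : Fin 3 → Fin d) :
    tensorOp ![A, B, C] x y = A (x 0) (y 0) * B (x 1) (y 1) * C (x 2) (y 2) := by
  simp [tensorOp, Fin.prod_univ_three]

lemma sum_factor {m : ℕ} (a : Fin m → ℝ) (b : Fin m × Fin m → ℝ) :
    ∑ i : Fin m, ∑ q : Fin m × Fin m, (a i * b q) ^ 2
      = (∑ i, (a i) ^ 2) * (∑ q, (b q) ^ 2) := by
  rw [Finset.sum_mul_sum]
  exact Finset.sum_congr rfl fun i _ => Finset.sum_congr rfl fun q _ => by ring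



section
variable {d : ℕ}

@[simp] lemma EQ0_apply (x : Fin 3 → Fin d) : (EQ0 x : Fin d × Fin d × Fin d) = (x 0, x 1, x 2) := rfl
@[simp] lemma EQ1_apply (x : Fin 3 → Fin d) : (EQ1 x : Fin d × Fin d × Fin d) = (x 1, x 2, x 0) := rfl
@[simp] lemma EQ2_apply (x : Fin 3 → Fin d) : (EQ2 x : Fin d × Fin d × Fin d) = (x 2, x 0, x 1) := rfl




lemma trace_submatrix_equiv' {k l : Type*} [Fintype k] [Fintype l] (e : k ≃ l)
    (M : Matrix l l ℂ) : (M.submatrix e e).trace = M.trace := by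
  simp only [Matrix.trace, Matrix.diag, Matrix.submatrix_apply]
  exact Fintype.sum_equiv e _ _ (fun x => rfl)

/-- trace factorization for product pure states -/
lemma trace_factor {d : ℕ} (e : (Fin 3 → Fin d) ≃ (Fin d × Fin d × Fin d))
    (Ψ : (Fin 3 → Fin d) → ℂ) (φ : Fin d → ℂ) (χ : Fin d × Fin d → ℂ)
    (hΨ : ∀ r, Ψ r = φ (e r).1 * χ (e r).2)
    (X : Matrix (Fin d) (Fin d) ℂ) (YZ : Matrix (Fin d × Fin d) (Fin d × Fin d) ℂ)
    (L : Matrix (Fin 3 → Fin d) (Fin 3 → Fin d) ℂ)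
    (hL : ∀ x y, L x y = X (e x).1 (e y).1 * YZ (e x).2 (e y).2) :
    (Matrix.vecMulVec Ψ (star Ψ) * L).trace
      = (Matrix.vecMulVec φ (star φ) * X).trace
        * (Matrix.vecMulVec χ (star χ) * YZ).trace := by
  have h1 : Matrix.vecMulVec Ψ (star Ψ)
      = (Matrix.vecMulVec φ (star φ) ⊗ₖ Matrix.vecMulVec χ (star χ)).submatrix e e := by
    ext x y
    simp only [Matrix.vecMulVec_apply, Matrix.submatrix_apply, Matrix.kroneckerMap_apply,
      Pi.star_apply, hΨ, RCLike.star_def]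
    rw [_root_.map_mul]; ring
  have h2 : L = (X ⊗ₖ YZ).submatrix e e := by
    ext x y
    simp only [Matrix.submatrix_apply, Matrix.kroneckerMap_apply, hL]
  rw [h1, h2, Matrix.submatrix_mul_equiv, trace_submatrix_equiv',
    ← Matrix.mul_kronecker_mul, Matrix.trace_kronecker]




lemma inner_toE_s5 {k : Type*} [Fintype k] [DecidableEq k] (A C : Matrix k k ℂ) :
    (inner ℂ ((WithLp.equiv 2 (k × k → ℂ)).symm (fun p => A p.1 p.2))
        ((WithLp.equiv 2 (k × k → ℂ)).symm (fun p => C p.1 p.2)) : ℂ)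
      = (Aᴴ * C).trace := by
  rw [PiLp.inner_apply]
  simp only [WithLp.equiv_symm_apply, PiLp.toLp_apply, RCLike.inner_apply, Matrix.trace,
    Matrix.diag, Matrix.mul_apply, Matrix.conjTranspose_apply]
  rw [Fintype.sum_prod_type, Finset.sum_comm]
  simp only [RCLike.star_def, mul_comm]

lemma bessel {k : Type*} [Fintype k] [DecidableEq k] [Nonempty k] {ι : Type*} [Fintype ι]
    [DecidableEq ι]
    (B : ι → Matrix k k ℂ) {ν : ℝ} (hν : 0 < ν)
    (htr : ∀ i, (B i).trace = 0)
    (horth : ∀ m n, ((B m)ᴴ * (B n)).trace = if m = n then (ν : ℂ) else 0)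
    (v : k → ℂ) (hv : ∑ x, Complex.normSq (v x) = 1) :
    ∑ i, Complex.normSq ((Matrix.vecMulVec v (star v) * B i).trace)
      ≤ ν * (1 - 1 / (Fintype.card k)) := by
  classical
  set D : ℝ := (Fintype.card k : ℝ) with hD
  have hD1 : (1 : ℝ) ≤ D := by
    have h := Fintype.card_pos (α := k)
    have : (1:ℕ) ≤ Fintype.card k := h
    rw [hD]; exact_mod_cast this
  have hDpos : (0 : ℝ) < D := lt_of_lt_of_le one_pos hD1
  set f : Matrix k k ℂ → EuclideanSpace ℂ (k × k) :=
    fun A => (WithLp.equiv 2 (k × k → ℂ)).symm (fun p => A p.1 p.2) with hf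
  have hinner : ∀ A C : Matrix k k ℂ, (inner ℂ (f A) (f C) : ℂ) = (Aᴴ * C).trace :=
    fun A C => inner_toE_s5 A C
  have hsmul1 : ∀ (c : ℝ) (X Y : Matrix k k ℂ),
      (inner ℂ (f ((c : ℂ) • X)) (f Y) : ℂ) = (c : ℂ) * (Xᴴ * Y).trace := by
    intro c X Y
    rw [hinner, Matrix.conjTranspose_smul, Matrix.smul_mul, Matrix.trace_smul,
      smul_eq_mul, show star ((c : ℂ)) = (c : ℂ) from by
        rw [Complex.star_def, Complex.conj_ofReal]]
  have hsmul : ∀ (c c' : ℝ) (X Y : Matrix k k ℂ),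
      (inner ℂ (f ((c : ℂ) • X)) (f ((c' : ℂ) • Y)) : ℂ)
        = (c : ℂ) * ((c' : ℂ) * (Xᴴ * Y).trace) := by
    intro c c' X Y
    rw [hsmul1, Matrix.mul_smul, Matrix.trace_smul, smul_eq_mul]
  set M : Matrix k k ℂ := Matrix.vecMulVec v (star v) with hM
  have hMH : Mᴴ = M := by
    ext x y
    simp [hM, Matrix.vecMulVec_apply, mul_comm]
  have htrM : M.trace = 1 := by
    simp only [hM, Matrix.trace, Matrix.diag, Matrix.vecMulVec_apply, Pi.star_apply]
    rw [← Complex.ofReal_one, ← hv]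
    push_cast
    exact Fintype.sum_congr _ _ (fun x => (Complex.mul_conj _))
  have htrMM : (Mᴴ * M).trace = 1 := by
    have hMM : M * M = M := by
      ext x y
      simp only [hM, Matrix.mul_apply, Matrix.vecMulVec_apply, Pi.star_apply,
        RCLike.star_def]
      have h1 : ∀ j : k, v x * (starRingEnd ℂ) (v j) * (v j * (starRingEnd ℂ) (v y))
          = (Complex.normSq (v j) : ℂ) * (v x * (starRingEnd ℂ) (v y)) := by
        intro j
        rw [Complex.normSq_eq_conj_mul_self]
        ring
      rw [Fintype.sum_congr _ _ h1, ← Finset.sum_mul, ← Complex.ofReal_sum, hv]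
      simp
    rw [hMH, hMM, htrM]
  set α : ℝ := (Real.sqrt D)⁻¹ with hα
  set β : ℝ := (Real.sqrt ν)⁻¹ with hβ
  have hα2 : (α : ℝ) ^ 2 * D = 1 := by
    rw [hα, ← Real.sqrt_inv, Real.sq_sqrt (by positivity)]
    field_simp
  have hβ2 : (β : ℝ) ^ 2 * ν = 1 := by
    rw [hβ, ← Real.sqrt_inv, Real.sq_sqrt (by positivity)]
    field_simp
  set G : Option ι → Matrix k k ℂ := fun o =>
    Option.elim o ((α : ℂ) • 1) (fun i => (β : ℂ) • B i) with hG
  have hGnone : G none = (α : ℂ) • 1 := rfl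
  have hGsome : ∀ i, G (some i) = (β : ℂ) • B i := fun i => rfl
  have horthon : Orthonormal ℂ (fun o => f (G o)) := by
    rw [orthonormal_iff_ite]
    intro a b
    cases a <;> cases b
    · rw [hGnone, hsmul, if_pos rfl, Matrix.conjTranspose_one, one_mul, Matrix.trace_one]
      have : (α * (α * (Fintype.card k : ℝ))) = 1 := by nlinarith [hα2]
      push_cast
      exact_mod_cast this
    · rename_i i
      rw [hGnone, hGsome, hsmul, Matrix.conjTranspose_one, one_mul, htr,
        if_neg (by simp), mul_zero, mul_zero]
    · rename_i i
      rw [hGnone, hGsome, hsmul, Matrix.mul_one, Matrix.trace_conjTranspose, htr,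
        if_neg (by simp), star_zero, mul_zero, mul_zero]
    · rename_i m n
      rw [hGsome, hGsome, hsmul, horth]
      by_cases h : m = n
      · subst h
        rw [if_pos rfl, if_pos rfl]
        have : (β * (β * ν)) = 1 := by nlinarith [hβ2]
        exact_mod_cast this
      · rw [if_neg h, if_neg (fun hc => h (Option.some.inj hc)), mul_zero, mul_zero]
  have hbessel := horthon.sum_inner_products_le (f M) (s := Finset.univ)
  rw [Fintype.sum_option] at hbessel
  have hnorm : ‖f M‖ ^ 2 = 1 := by
    rw [← inner_self_eq_norm_sq (𝕜 := ℂ), hinner, htrMM]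
    simp
  have hnone : ‖(inner ℂ (f (G none)) (f M) : ℂ)‖ ^ 2 = 1 / D := by
    rw [hGnone, hsmul1, Matrix.conjTranspose_one, one_mul, htrM, mul_one,
      Complex.norm_real, Real.norm_eq_abs, sq_abs]
    field_simp
    nlinarith [hα2]
  have hsome : ∀ i, ‖(inner ℂ (f (G (some i))) (f M) : ℂ)‖ ^ 2
      = Complex.normSq ((M * B i).trace) / ν := by
    intro i
    have hconj : ((B i)ᴴ * M).trace = star ((M * B i).trace) := by
      rw [← Matrix.trace_conjTranspose, Matrix.conjTranspose_mul, hMH]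
    rw [hGsome, hsmul1, hconj, norm_mul, norm_star, mul_pow, Complex.norm_real,
      Real.norm_eq_abs, sq_abs, Complex.sq_norm]
    have hb : β ^ 2 = 1 / ν := by
      field_simp at hβ2 ⊢
      linarith [hβ2]
    rw [hb]
    ring
  rw [hnorm, hnone] at hbessel
  have hsum : ∑ i, ‖(inner ℂ (f (G (some i))) (f M) : ℂ)‖ ^ 2
      = (∑ i, Complex.normSq ((M * B i).trace)) / ν := by
    rw [Finset.sum_div]
    exact Fintype.sum_congr _ _ hsome
  rw [hsum] at hbessel
  have h1 : (∑ i, Complex.normSq ((M * B i).trace)) / ν ≤ 1 - 1 / D := by linarith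
  calc ∑ i, Complex.normSq ((M * B i).trace)
      = ((∑ i, Complex.normSq ((M * B i).trace)) / ν) * ν := by field_simp
    _ ≤ (1 - 1 / D) * ν := mul_le_mul_of_nonneg_right h1 (le_of_lt hν)
    _ = ν * (1 - 1 / D) := by ring


lemma pure_bound (d : ℕ) (hd : 2 ≤ d)
    (lam : Fin (d ^ 2 - 1) → Matrix (Fin d) (Fin d) ℂ)
    (hherm : ∀ i, (lam i).IsHermitian)
    (htraceless : ∀ i, (lam i).trace = 0)
    (horth : ∀ m n, (lam m * lam n).trace = if m = n then 2 else 0)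
    (Ψ : (Fin 3 → Fin d) → ℂ)
    (j : Fin 3) (φ : Fin d → ℂ) (χ : Fin d × Fin d → ℂ)
    (hφ : ∑ x, Complex.normSq (φ x) = 1) (hχ : ∑ x, Complex.normSq (χ x) = 1)
    (hfac : ∀ r, Ψ r = φ (r j) * χ (r (j + 1), r (j + 2))) :
    ∑ i₁, ∑ i₂, ∑ i₃,
        ((Matrix.vecMulVec Ψ (star Ψ) * tensorOp ![lam i₁, lam i₂, lam i₃]).trace.re) ^ 2
      ≤ 8 * ((d : ℝ) - 1) * ((d : ℝ) ^ 2 - 1) / (d : ℝ) ^ 3 := by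
  haveI : Nonempty (Fin d) := ⟨⟨0, by omega⟩⟩
  have hdR : (2 : ℝ) ≤ (d : ℝ) := by exact_mod_cast hd
  have hd0 : (0 : ℝ) < (d : ℝ) := by linarith
  -- Bessel for the single party
  have horth1 : ∀ m n, ((lam m)ᴴ * lam n).trace = if m = n then (((2:ℝ) : ℂ)) else 0 := by
    intro m n
    rw [hherm m, horth]
    norm_num
  have ht := bessel lam (by norm_num : (0:ℝ) < 2) htraceless horth1 φ hφ
  rw [Fintype.card_fin] at ht
  -- Bessel for the pair
  have htrK : ∀ q : Fin (d^2-1) × Fin (d^2-1), ((lam q.1 ⊗ₖ lam q.2)).trace = 0 := by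
    intro q
    rw [Matrix.trace_kronecker, htraceless, zero_mul]
  have horthK : ∀ m n : Fin (d^2-1) × Fin (d^2-1),
      ((lam m.1 ⊗ₖ lam m.2)ᴴ * (lam n.1 ⊗ₖ lam n.2)).trace
        = if m = n then (((4:ℝ) : ℂ)) else 0 := by
    intro m n
    rw [kron_conjT, hherm m.1, hherm m.2, ← Matrix.mul_kronecker_mul,
      Matrix.trace_kronecker, horth, horth]
    by_cases h1 : m.1 = n.1 <;> by_cases h2 : m.2 = n.2 <;>
      simp [h1, h2, Prod.ext_iff] <;> norm_num
  have hs := bessel (fun q : Fin (d^2-1) × Fin (d^2-1) => lam q.1 ⊗ₖ lam q.2)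
    (by norm_num : (0:ℝ) < 4) htrK horthK χ hχ
  rw [Fintype.card_prod, Fintype.card_fin] at hs
  set a : Fin (d^2-1) → ℝ :=
    fun i => ((Matrix.vecMulVec φ (star φ) * lam i).trace.re) with ha_def
  set b : Fin (d^2-1) × Fin (d^2-1) → ℝ :=
    fun q => ((Matrix.vecMulVec χ (star χ) * (lam q.1 ⊗ₖ lam q.2)).trace.re) with hb_def
  have ha : ∑ i, (a i)^2 ≤ 2 * (1 - 1/(d:ℝ)) := by
    refine le_trans (Finset.sum_le_sum fun i _ => ?_) ht
    rw [Complex.normSq_apply]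
    nlinarith [sq_nonneg ((Matrix.vecMulVec φ (star φ) * lam i).trace.im)]
  have hb : ∑ q, (b q)^2 ≤ 4 * (1 - 1/((d:ℝ)*(d:ℝ))) := by
    refine le_trans (Finset.sum_le_sum fun q _ => ?_) (le_trans hs (le_of_eq ?_))
    · rw [Complex.normSq_apply]
      nlinarith [sq_nonneg ((Matrix.vecMulVec χ (star χ) * (lam q.1 ⊗ₖ lam q.2)).trace.im)]
    · push_cast
      ring
  have ha0 : (0:ℝ) ≤ ∑ i, (a i)^2 := Finset.sum_nonneg fun i _ => sq_nonneg _
  have hb0 : (0:ℝ) ≤ ∑ q, (b q)^2 := Finset.sum_nonneg fun q _ => sq_nonneg _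
  have hermK : ∀ (m n : Fin (d^2-1)), (lam m ⊗ₖ lam n)ᴴ = lam m ⊗ₖ lam n := by
    intro m n
    rw [kron_conjT, hherm m, hherm n]
  have key : (∑ i₁, ∑ i₂, ∑ i₃,
      ((Matrix.vecMulVec Ψ (star Ψ) * tensorOp ![lam i₁, lam i₂, lam i₃]).trace.re) ^ 2)
      = (∑ i, (a i)^2) * (∑ q, (b q)^2) := by
    fin_cases j
    · -- j = 0
      have hfac' : ∀ r : Fin 3 → Fin d, Ψ r = φ (r 0) * χ (r 1, r 2) := fun r => hfac r
      have hT : ∀ i₁ i₂ i₃ : Fin (d^2-1),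
          ((Matrix.vecMulVec Ψ (star Ψ) * tensorOp ![lam i₁, lam i₂, lam i₃]).trace.re)
            = a i₁ * b (i₂, i₃) := by
        intro i₁ i₂ i₃
        have h := trace_factor (EQ0 (d := d)) Ψ φ χ hfac' (lam i₁) (lam i₂ ⊗ₖ lam i₃)
          (tensorOp ![lam i₁, lam i₂, lam i₃])
          (fun x y => by
            rw [tensorOp3]
            simp only [EQ0_apply, Matrix.kroneckerMap_apply]
            ring)
        rw [h, trace_real_s5 φ (lam i₁) (hherm i₁), trace_real_s5 χ _ (hermK i₂ i₃),
          ← Complex.ofReal_mul, Complex.ofReal_re]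
      calc ∑ i₁, ∑ i₂, ∑ i₃,
            ((Matrix.vecMulVec Ψ (star Ψ) * tensorOp ![lam i₁, lam i₂, lam i₃]).trace.re) ^ 2
          = ∑ i₁, ∑ q : Fin (d^2-1) × Fin (d^2-1), (a i₁ * b q)^2 := by
            refine Finset.sum_congr rfl fun i₁ _ => ?_
            rw [Fintype.sum_prod_type]
            exact Finset.sum_congr rfl fun i₂ _ => Finset.sum_congr rfl fun i₃ _ => by
              rw [hT]
        _ = (∑ i, (a i)^2) * (∑ q, (b q)^2) := sum_factor a b
    · -- j = 1
      have hfac' : ∀ r : Fin 3 → Fin d, Ψ r = φ (r 1) * χ (r 2, r 0) := fun r => hfac r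
      have hT : ∀ i₁ i₂ i₃ : Fin (d^2-1),
          ((Matrix.vecMulVec Ψ (star Ψ) * tensorOp ![lam i₁, lam i₂, lam i₃]).trace.re)
            = a i₂ * b (i₃, i₁) := by
        intro i₁ i₂ i₃
        have h := trace_factor (EQ1 (d := d)) Ψ φ χ hfac' (lam i₂) (lam i₃ ⊗ₖ lam i₁)
          (tensorOp ![lam i₁, lam i₂, lam i₃])
          (fun x y => by
            rw [tensorOp3]
            simp only [EQ1_apply, Matrix.kroneckerMap_apply]
            ring)
        rw [h, trace_real_s5 φ (lam i₂) (hherm i₂), trace_real_s5 χ _ (hermK i₃ i₁),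
          ← Complex.ofReal_mul, Complex.ofReal_re]
      calc ∑ i₁, ∑ i₂, ∑ i₃,
            ((Matrix.vecMulVec Ψ (star Ψ) * tensorOp ![lam i₁, lam i₂, lam i₃]).trace.re) ^ 2
          = ∑ i₂, ∑ q : Fin (d^2-1) × Fin (d^2-1), (a i₂ * b q)^2 := by
            rw [Finset.sum_comm]
            refine Finset.sum_congr rfl fun i₂ _ => ?_
            rw [Finset.sum_comm, Fintype.sum_prod_type]
            exact Finset.sum_congr rfl fun i₃ _ => Finset.sum_congr rfl fun i₁ _ => by
              rw [hT]
        _ = (∑ i, (a i)^2) * (∑ q, (b q)^2) := sum_factor a b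
    · -- j = 2
      have hfac' : ∀ r : Fin 3 → Fin d, Ψ r = φ (r 2) * χ (r 0, r 1) := fun r => hfac r
      have hT : ∀ i₁ i₂ i₃ : Fin (d^2-1),
          ((Matrix.vecMulVec Ψ (star Ψ) * tensorOp ![lam i₁, lam i₂, lam i₃]).trace.re)
            = a i₃ * b (i₁, i₂) := by
        intro i₁ i₂ i₃
        have h := trace_factor (EQ2 (d := d)) Ψ φ χ hfac' (lam i₃) (lam i₁ ⊗ₖ lam i₂)
          (tensorOp ![lam i₁, lam i₂, lam i₃])
          (fun x y => by
            rw [tensorOp3]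
            simp only [EQ2_apply, Matrix.kroneckerMap_apply]
            ring)
        rw [h, trace_real_s5 φ (lam i₃) (hherm i₃), trace_real_s5 χ _ (hermK i₁ i₂),
          ← Complex.ofReal_mul, Complex.ofReal_re]
      calc ∑ i₁, ∑ i₂, ∑ i₃,
            ((Matrix.vecMulVec Ψ (star Ψ) * tensorOp ![lam i₁, lam i₂, lam i₃]).trace.re) ^ 2
          = ∑ i₃, ∑ q : Fin (d^2-1) × Fin (d^2-1), (a i₃ * b q)^2 := by
            calc ∑ i₁, ∑ i₂, ∑ i₃,
                  ((Matrix.vecMulVec Ψ (star Ψ) * tensorOp ![lam i₁, lam i₂, lam i₃]).trace.re) ^ 2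
                = ∑ i₁, ∑ i₃, ∑ i₂,
                  ((Matrix.vecMulVec Ψ (star Ψ) * tensorOp ![lam i₁, lam i₂, lam i₃]).trace.re) ^ 2 :=
                  Finset.sum_congr rfl fun i₁ _ => Finset.sum_comm
              _ = ∑ i₃, ∑ i₁, ∑ i₂,
                  ((Matrix.vecMulVec Ψ (star Ψ) * tensorOp ![lam i₁, lam i₂, lam i₃]).trace.re) ^ 2 :=
                  Finset.sum_comm
              _ = ∑ i₃, ∑ q : Fin (d^2-1) × Fin (d^2-1), (a i₃ * b q)^2 := by
                  refine Finset.sum_congr rfl fun i₃ _ => ?_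
                  rw [Fintype.sum_prod_type]
                  exact Finset.sum_congr rfl fun i₁ _ => Finset.sum_congr rfl fun i₂ _ => by
                    rw [hT]
        _ = (∑ i, (a i)^2) * (∑ q, (b q)^2) := sum_factor a b
  rw [key]
  calc (∑ i, (a i)^2) * (∑ q, (b q)^2)
      ≤ (2 * (1 - 1/(d:ℝ))) * (4 * (1 - 1/((d:ℝ)*(d:ℝ)))) := by
        apply mul_le_mul ha hb hb0
        nlinarith
    _ = 8 * ((d : ℝ) - 1) * ((d : ℝ) ^ 2 - 1) / (d : ℝ) ^ 3 := by
        field_simp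
        ring

/-- Theorem 1: If `ρ` is a biseparable density matrix on
`(ℂ^d)^{⊗3}`, i.e. a finite convex combination of pure states each of which is
a product across one of the bipartitions `j | {j+1, j+2}` of the three
subsystems, then the standard norm of its full correlation tensor satisfies
`‖T‖ ≤ √(8(d-1)(d²-1)/d³)`.  Consequently, any tripartite state violating this
bound is genuinely multipartite entangled (not biseparable). -/
theorem biseparable_full_correlation_norm_bound
    (d : ℕ) (hd : 2 ≤ d)
    (lam : Fin (d ^ 2 - 1) → Matrix (Fin d) (Fin d) ℂ)
    (hherm : ∀ i, (lam i).IsHermitian)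
    (htraceless : ∀ i, (lam i).trace = 0)
    (horth : ∀ m n, (lam m * lam n).trace = if m = n then 2 else 0)
    (N : ℕ) (p : Fin N → ℝ) (hp : ∀ a, 0 ≤ p a) (hpsum : ∑ a, p a = 1)
    (Ψ : Fin N → (Fin 3 → Fin d) → ℂ)
    (hΨunit : ∀ a, ∑ x, Complex.normSq (Ψ a x) = 1)
    (hbisep : ∀ a, ∃ (j : Fin 3) (φ : Fin d → ℂ) (χ : Fin d × Fin d → ℂ),
        (∑ x, Complex.normSq (φ x) = 1) ∧ (∑ x, Complex.normSq (χ x) = 1) ∧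
        ∀ r, Ψ a r = φ (r j) * χ (r (j + 1), r (j + 2)))
    (ρ : Matrix (Fin 3 → Fin d) (Fin 3 → Fin d) ℂ)
    (hρ : ρ = ∑ a, (p a : ℂ) • Matrix.vecMulVec (Ψ a) (star (Ψ a))) :
    Real.sqrt (∑ i₁, ∑ i₂, ∑ i₃,
        ((ρ * tensorOp ![lam i₁, lam i₂, lam i₃]).trace.re) ^ 2) ≤
      Real.sqrt (8 * ((d : ℝ) - 1) * ((d : ℝ) ^ 2 - 1) / (d : ℝ) ^ 3) := by
  classical
  set I := Fin (d ^ 2 - 1) × Fin (d ^ 2 - 1) × Fin (d ^ 2 - 1) with hI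
  set T : Fin N → I → ℝ := fun a q =>
    ((Matrix.vecMulVec (Ψ a) (star (Ψ a))
      * tensorOp ![lam q.1, lam q.2.1, lam q.2.2]).trace.re) with hT
  have hlin : ∀ q : I,
      ((ρ * tensorOp ![lam q.1, lam q.2.1, lam q.2.2]).trace.re) = ∑ a, p a * T a q := by
    intro q
    rw [hρ, Finset.sum_mul, Matrix.trace_sum, Complex.re_sum]
    refine Finset.sum_congr rfl fun a _ => ?_
    rw [Matrix.smul_mul, Matrix.trace_smul, smul_eq_mul, Complex.re_ofReal_mul]
  set g : Fin N → EuclideanSpace ℝ I := fun a => (WithLp.equiv 2 (I → ℝ)).symm (T a) with hg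
  have happly : ∀ (a : Fin N) (q : I), g a q = T a q := fun a q => rfl
  have hnorm_g : ∀ a, ‖g a‖ = Real.sqrt (∑ q, (T a q) ^ 2) := by
    intro a
    rw [EuclideanSpace.norm_eq]
    congr 1
    exact Finset.sum_congr rfl fun q _ => by
      rw [happly, Real.norm_eq_abs, sq_abs]
  set x : EuclideanSpace ℝ I := ∑ a, p a • g a with hx
  have hxq : ∀ q : I, x q = ∑ a, p a * T a q := by
    intro q
    rw [hx]
    rw [show (∑ a, p a • g a) q = ∑ a, (p a • g a) q from by rw [WithLp.ofLp_sum, Finset.sum_apply]]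
    exact Finset.sum_congr rfl fun a _ => rfl
  have hLHS : Real.sqrt (∑ i₁, ∑ i₂, ∑ i₃,
      ((ρ * tensorOp ![lam i₁, lam i₂, lam i₃]).trace.re) ^ 2) = ‖x‖ := by
    rw [EuclideanSpace.norm_eq]
    congr 1
    rw [Fintype.sum_prod_type]
    refine Finset.sum_congr rfl fun i₁ _ => ?_
    rw [Fintype.sum_prod_type]
    refine Finset.sum_congr rfl fun i₂ _ => Finset.sum_congr rfl fun i₃ _ => ?_
    rw [Real.norm_eq_abs, sq_abs, hxq]
    exact congrArg (· ^ 2) (hlin (i₁, i₂, i₃))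
  rw [hLHS]
  have hbound : ∀ a, ‖g a‖ ≤ Real.sqrt (8 * ((d : ℝ) - 1) * ((d : ℝ) ^ 2 - 1) / (d : ℝ) ^ 3) := by
    intro a
    rw [hnorm_g]
    apply Real.sqrt_le_sqrt
    obtain ⟨j, φ, χ, hφ, hχ, hfac⟩ := hbisep a
    have hpb := pure_bound d hd lam hherm htraceless horth (Ψ a) j φ χ hφ hχ hfac
    refine le_trans (le_of_eq ?_) hpb
    rw [Fintype.sum_prod_type]
    refine Finset.sum_congr rfl fun i₁ _ => ?_
    rw [Fintype.sum_prod_type]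
  calc ‖x‖ ≤ ∑ a, ‖p a • g a‖ := norm_sum_le _ _
    _ = ∑ a, p a * ‖g a‖ := Finset.sum_congr rfl fun a _ => by
        rw [norm_smul, Real.norm_eq_abs, abs_of_nonneg (hp a)]
    _ ≤ ∑ a, p a * Real.sqrt (8 * ((d : ℝ) - 1) * ((d : ℝ) ^ 2 - 1) / (d : ℝ) ^ 3) :=
        Finset.sum_le_sum fun a _ => mul_le_mul_of_nonneg_left (hbound a) (hp a)
    _ = Real.sqrt (8 * ((d : ℝ) - 1) * ((d : ℝ) ^ 2 - 1) / (d : ℝ) ^ 3) := by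
        rw [← Finset.sum_mul, hpsum, one_mul]
end
end
end
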